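/- arXiv:0801.1963 — 3 statements merged into one kernel-verified Lean document; each statement's English description precedes it below -/
import Mathlib

section
/- Let (e^{tD}) be a uniformly exponentially stable C₀-semigroup on Y with generator D (so 0 ∈ ρ(D)), C ∈ L(X, Y), and x ∈ X such that ℓ := lim_{t→∞} e^{tA}x exists in X, where (e^{tA}) is a C₀-semigroup on X. Then lim_{t→∞} R(t)x = −D⁻¹ C ℓ exists, where R(t)x = ∫₀ᵗ e^{(t−s)D} C e^{sA} x ds. -/
open MeasureTheory Set Filter Real

noncomputable section

/-- A strongly continuous semigroup of bounded linear operators. -/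
def IsC0Semigroup {E : Type*} [NormedAddCommGroup E] [NormedSpace ℝ E]
    (T : ℝ → E →L[ℝ] E) : Prop :=
  T 0 = 1 ∧ (∀ s t : ℝ, 0 ≤ s → 0 ≤ t → T (s + t) = (T s).comp (T t)) ∧
    ∀ x : E, ContinuousOn (fun t => T t x) (Set.Ici 0)

/-- `A` with domain `dom` is the generator of the `C₀`-semigroup `T`. -/
def Generates {E : Type*} [NormedAddCommGroup E] [NormedSpace ℝ E]
    (dom : Set E) (A : E → E) (T : ℝ → E →L[ℝ] E) : Prop :=
  IsC0Semigroup T ∧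
    (∀ x : E, x ∈ dom ↔ ∃ y : E, HasDerivWithinAt (fun t => T t x) y (Set.Ici 0) 0) ∧
    ∀ x ∈ dom, HasDerivWithinAt (fun t => T t x) (A x) (Set.Ici 0) 0

section Aux

variable {Y : Type*} [NormedAddCommGroup Y] [NormedSpace ℝ Y] [CompleteSpace Y]

lemma aux_uIcc_subset_Ici {a b : ℝ} (ha : 0 ≤ a) (hb : 0 ≤ b) :
    Set.uIcc a b ⊆ Set.Ici 0 := fun z hz => by
  have h1 : min a b ≤ z := hz.1
  have : (0:ℝ) ≤ min a b := le_min ha hb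
  exact le_trans this h1

lemma aux_TD_intervalIntegrable {TD : ℝ → Y →L[ℝ] Y}
    (hTDc : ∀ y : Y, ContinuousOn (fun t => TD t y) (Set.Ici 0)) (y : Y)
    {a b : ℝ} (ha : 0 ≤ a) (hb : 0 ≤ b) :
    IntervalIntegrable (fun s => TD s y) MeasureTheory.volume a b :=
  ((hTDc y).mono (aux_uIcc_subset_Ici ha hb)).intervalIntegrable

/-- FTC derivative of `H t = ∫_0^t TD s y` within `Ici b` at `b ≥ 0`. -/
lemma aux_H_deriv {TD : ℝ → Y →L[ℝ] Y}
    (hTDc : ∀ y : Y, ContinuousOn (fun t => TD t y) (Set.Ici 0)) (y : Y)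
    {b : ℝ} (hb : 0 ≤ b) :
    HasDerivWithinAt (fun t => ∫ s in (0:ℝ)..t, TD s y) (TD b y) (Set.Ici b) b := by
  have hIoi : Set.Ioi b ⊆ Set.Ici (0:ℝ) := fun z hz => le_of_lt (lt_of_le_of_lt hb hz)
  refine intervalIntegral.integral_hasDerivWithinAt_right
    (aux_TD_intervalIntegrable hTDc y le_rfl hb) ?_ ?_
  · exact ((hTDc y).stronglyMeasurableAtFilter_nhdsWithin measurableSet_Ici b).filter_mono
      (nhdsWithin_mono b hIoi)
  · exact ((hTDc y) b hb).mono hIoi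

/-- The key resolvent formula: `∫_0^T TD s y = Dinv (TD T y) - Dinv y`. -/
lemma aux_integral_TD_eq {domD : Set Y} {D : Y → Y} {TD : ℝ → Y →L[ℝ] Y}
    {Dinv : Y →L[ℝ] Y} (hD : Generates domD D TD)
    (hinv₁ : ∀ y ∈ domD, Dinv (D y) = y) (y : Y) {T : ℝ} (hT : 0 ≤ T) :
    ∫ s in (0:ℝ)..T, TD s y = Dinv (TD T y) - Dinv y := by
  obtain ⟨⟨hTD0, hTDsg, hTDc⟩, hdom, hgen⟩ := hD
  set H : ℝ → Y := fun t => ∫ s in (0:ℝ)..t, TD s y with hHdef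
  have hint : ∀ a b : ℝ, 0 ≤ a → 0 ≤ b →
      IntervalIntegrable (fun s => TD s y) MeasureTheory.volume a b :=
    fun a b ha hb => aux_TD_intervalIntegrable hTDc y ha hb
  have key : ∀ t, 0 ≤ t → TD t (H T) = H (t + T) - H t := by
    intro t ht
    have h1 : TD t (H T) = ∫ s in (0:ℝ)..T, TD t (TD s y) :=
      ((TD t).intervalIntegral_comp_comm (hint 0 T le_rfl hT)).symm
    have h2 : (∫ s in (0:ℝ)..T, TD t (TD s y)) = ∫ s in (0:ℝ)..T, TD (t + s) y := by
      apply intervalIntegral.integral_congr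
      intro s hs
      have hs0 : 0 ≤ s := aux_uIcc_subset_Ici le_rfl hT hs
      show TD t (TD s y) = TD (t + s) y
      rw [hTDsg t s ht hs0, ContinuousLinearMap.comp_apply]
    have h3 : (∫ s in (0:ℝ)..T, TD (t + s) y) = ∫ s in t..(t + T), TD s y := by
      simpa using intervalIntegral.integral_comp_add_left (fun s => TD s y) t
        (a := 0) (b := T)
    have h4 : (∫ s in t..(t + T), TD s y) = H (t + T) - H t := by
      rw [hHdef]
      exact (intervalIntegral.integral_interval_sub_left
        (hint 0 (t + T) le_rfl (by linarith)) (hint 0 t le_rfl ht)).symm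
    rw [h1, h2, h3, h4]
  -- derivative of t ↦ TD t (H T) at 0 within Ici 0
  have hcomp : HasDerivWithinAt (fun t => H (T + t)) (TD T y) (Set.Ici 0) 0 := by
    have houter : HasDerivWithinAt H (TD T y) (Set.Ici T) T := aux_H_deriv hTDc y hT
    have hinner : HasDerivWithinAt (fun t : ℝ => T + t) 1 (Set.Ici 0) 0 := by
      simpa using ((hasDerivAt_id (0:ℝ)).const_add T).hasDerivWithinAt (s := Set.Ici 0)
    have hmaps : Set.MapsTo (fun t : ℝ => T + t) (Set.Ici 0) (Set.Ici T) := by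
      intro z hz
      simpa using by linarith [mem_Ici.mp hz]
    have houter' : HasDerivWithinAt H (TD T y) (Set.Ici T) ((fun t : ℝ => T + t) 0) := by
      simpa using houter
    simpa [Function.comp_def] using HasDerivWithinAt.scomp (0:ℝ) houter' hinner hmaps
  have hder0 : HasDerivWithinAt H (TD 0 y) (Set.Ici 0) 0 := aux_H_deriv hTDc y le_rfl
  have hsub : HasDerivWithinAt (fun t => H (T + t) - H t) (TD T y - y) (Set.Ici 0) 0 := by
    have := hcomp.sub hder0
    have hy : TD 0 y = y := by rw [hTD0]; rfl
    rwa [hy] at this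
  have hder : HasDerivWithinAt (fun t => TD t (H T)) (TD T y - y) (Set.Ici 0) 0 := by
    refine hsub.congr (fun t ht => ?_) ?_
    · rw [key t ht, add_comm]
    · rw [key 0 le_rfl, add_comm]
  have hvdom : H T ∈ domD := (hdom (H T)).2 ⟨_, hder⟩
  have hDv : HasDerivWithinAt (fun t => TD t (H T)) (D (H T)) (Set.Ici 0) 0 :=
    hgen (H T) hvdom
  have huniq : D (H T) = TD T y - y := by
    have hud : UniqueDiffWithinAt ℝ (Set.Ici (0:ℝ)) 0 :=
      uniqueDiffOn_Ici (0:ℝ) 0 self_mem_Ici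
    rw [← hDv.derivWithin hud, ← hder.derivWithin hud]
  have hfin := hinv₁ (H T) hvdom
  rw [huniq, map_sub] at hfin
  exact hfin.symm

/-- `TD t y → 0` as `t → ∞` under an exponential bound with negative rate. -/
lemma aux_tendsto_TD_zero {TD : ℝ → Y →L[ℝ] Y} {M ε : ℝ} (hε : ε < 0)
    (hTDb : ∀ t : ℝ, 0 ≤ t → ‖TD t‖ ≤ M * Real.exp (ε * t)) (y : Y) :
    Tendsto (fun t => TD t y) atTop (nhds 0) := by
  have hexp : Tendsto (fun t : ℝ => Real.exp (ε * t)) atTop (nhds 0) :=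
    Real.tendsto_exp_atBot.comp ((tendsto_const_mul_atBot_of_neg hε).2 tendsto_id)
  have hbnd : Tendsto (fun t : ℝ => M * ‖y‖ * Real.exp (ε * t)) atTop (nhds 0) := by
    simpa using hexp.const_mul (M * ‖y‖)
  refine squeeze_zero_norm' ?_ hbnd
  filter_upwards [eventually_ge_atTop (0:ℝ)] with t ht
  calc ‖TD t y‖ ≤ ‖TD t‖ * ‖y‖ := (TD t).le_opNorm y
    _ ≤ M * Real.exp (ε * t) * ‖y‖ :=
        mul_le_mul_of_nonneg_right (hTDb t ht) (norm_nonneg _)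
    _ = M * ‖y‖ * Real.exp (ε * t) := by ring

/-- Joint continuity of `s ↦ TD (t - s) (f s)` on `[0, t]`. -/
lemma aux_contOn_conv {TD : ℝ → Y →L[ℝ] Y}
    (hTDc : ∀ y : Y, ContinuousOn (fun t => TD t y) (Set.Ici 0))
    {B : ℝ} (hB : ∀ τ : ℝ, 0 ≤ τ → ‖TD τ‖ ≤ B)
    {f : ℝ → Y} {t : ℝ} (hf : ContinuousOn f (Set.Icc 0 t)) :
    ContinuousOn (fun s => TD (t - s) (f s)) (Set.Icc 0 t) := by
  intro s₀ hs₀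
  have hts₀ : (0:ℝ) ≤ t - s₀ := by linarith [hs₀.2]
  have hcf : ContinuousWithinAt f (Set.Icc 0 t) s₀ := hf s₀ hs₀
  have h1 : Tendsto (fun s => TD (t - s) (f s - f s₀)) (nhdsWithin s₀ (Set.Icc 0 t))
      (nhds 0) := by
    have hnorm : Tendsto (fun s => B * ‖f s - f s₀‖) (nhdsWithin s₀ (Set.Icc 0 t))
        (nhds 0) := by
      have : Tendsto (fun s => ‖f s - f s₀‖) (nhdsWithin s₀ (Set.Icc 0 t)) (nhds 0) := by
        have hcf' : Tendsto f (nhdsWithin s₀ (Set.Icc 0 t)) (nhds (f s₀)) := hcf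
        have hdiff : Tendsto (fun s => f s - f s₀) (nhdsWithin s₀ (Set.Icc 0 t))
            (nhds (f s₀ - f s₀)) := hcf'.sub tendsto_const_nhds
        rw [sub_self] at hdiff
        simpa using hdiff.norm
      simpa using this.const_mul B
    refine squeeze_zero_norm' ?_ hnorm
    filter_upwards [self_mem_nhdsWithin] with s hs
    calc ‖TD (t - s) (f s - f s₀)‖ ≤ ‖TD (t - s)‖ * ‖f s - f s₀‖ :=
          (TD (t - s)).le_opNorm _
      _ ≤ B * ‖f s - f s₀‖ :=
          mul_le_mul_of_nonneg_right (hB _ (by linarith [hs.2])) (norm_nonneg _)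
  have h2 : Tendsto (fun s => TD (t - s) (f s₀)) (nhdsWithin s₀ (Set.Icc 0 t))
      (nhds (TD (t - s₀) (f s₀))) := by
    have hsub : ContinuousWithinAt (fun s : ℝ => t - s) (Set.Icc 0 t) s₀ :=
      (continuous_const.sub continuous_id).continuousWithinAt
    exact ((hTDc (f s₀)) (t - s₀) hts₀).comp hsub
      (fun s hs => by simpa using by linarith [hs.2])
  have h3 : Tendsto (fun s => TD (t - s) (f s)) (nhdsWithin s₀ (Set.Icc 0 t))
      (nhds (0 + TD (t - s₀) (f s₀))) := by
    have := h1.add h2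
    refine this.congr (fun s => ?_)
    rw [← map_add, sub_add_cancel]
  simpa [ContinuousWithinAt] using h3

end Aux

variable {X Y : Type*} [NormedAddCommGroup X] [NormedSpace ℝ X] [CompleteSpace X]
  [NormedAddCommGroup Y] [NormedSpace ℝ Y] [CompleteSpace Y]

set_option maxHeartbeats 2000000 in
/-- If `e^{tA}x → ℓ` and `(e^{tD})` is uniformly exponentially stable with invertible
generator `D`, then `R(t)x → -D⁻¹ C ℓ`. -/
theorem convolution_limit
    (TA : ℝ → X →L[ℝ] X) (domD : Set Y) (D : Y → Y) (TD : ℝ → Y →L[ℝ] Y)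
    (C : X →L[ℝ] Y) (Dinv : Y →L[ℝ] Y) (M ε : ℝ)
    (hTA : IsC0Semigroup TA) (hD : Generates domD D TD)
    (hM : 1 ≤ M) (hε : ε < 0)
    (hTDb : ∀ t : ℝ, 0 ≤ t → ‖TD t‖ ≤ M * Real.exp (ε * t))
    (hinv₁ : ∀ y ∈ domD, Dinv (D y) = y)
    (hinv₂ : ∀ y : Y, Dinv y ∈ domD ∧ D (Dinv y) = y)
    (x : X) (ℓ : X) (hx : Tendsto (fun t => TA t x) atTop (nhds ℓ)) :
    Tendsto (fun t => ∫ s in (0:ℝ)..t, TD (t - s) (C (TA s x))) atTop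
      (nhds (-(Dinv (C ℓ)))) := by
  have hTDc : ∀ y : Y, ContinuousOn (fun t => TD t y) (Set.Ici 0) := hD.1.2.2
  have hMpos : (0:ℝ) < M := lt_of_lt_of_le one_pos hM
  have hTDB : ∀ τ : ℝ, 0 ≤ τ → ‖TD τ‖ ≤ M := by
    intro τ hτ
    refine (hTDb τ hτ).trans ?_
    have : Real.exp (ε * τ) ≤ 1 := Real.exp_le_one_iff.2 (by nlinarith)
    nlinarith
  -- the deviation function
  set w : ℝ → Y := fun s => C (TA s x) - C ℓ with hwdef
  have hwc : Tendsto w atTop (nhds 0) := by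
    have h1 : Tendsto (fun s => C (TA s x)) atTop (nhds (C ℓ)) :=
      (C.continuous.tendsto ℓ).comp hx
    have h2 : Tendsto (fun s : ℝ => C (TA s x) - C ℓ) atTop (nhds (C ℓ - C ℓ)) :=
      h1.sub tendsto_const_nhds
    rw [sub_self] at h2
    exact h2
  have hwcont : ContinuousOn w (Set.Ici 0) :=
    (C.continuous.comp_continuousOn (hTA.2.2 x)).sub continuousOn_const
  -- a global bound on ‖w‖ over [0, ∞)
  obtain ⟨K, hK1, hKb⟩ : ∃ K : ℝ, 1 ≤ K ∧ ∀ s : ℝ, 0 ≤ s → ‖w s‖ ≤ K := by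
    have h1 : ∀ᶠ s in atTop, ‖w s‖ < 1 := by
      have := hwc.norm
      simp only [norm_zero] at this
      exact this.eventually_lt_const one_pos
    obtain ⟨T₁, hT₁⟩ := eventually_atTop.1 h1
    set T₁' := max T₁ 0 with hT₁'def
    obtain ⟨K₀, hK₀⟩ := (isCompact_Icc (a := (0:ℝ)) (b := T₁')).exists_bound_of_continuousOn
      (hwcont.mono (fun z hz => hz.1))
    refine ⟨max K₀ 1, le_max_right _ _, fun s hs => ?_⟩
    rcases le_total s T₁' with h | h
    · exact (hK₀ s ⟨hs, h⟩).trans (le_max_left _ _)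
    · exact le_trans (le_of_lt (hT₁ s (le_trans (le_max_left _ _) h))) (le_max_right _ _)
  have hKpos : (0:ℝ) < K := lt_of_lt_of_le one_pos hK1
  -- continuity of the convolution integrand
  have hGcont : ∀ t : ℝ, 0 ≤ t →
      ContinuousOn (fun s => TD (t - s) (w s)) (Set.Icc 0 t) :=
    fun t ht => aux_contOn_conv hTDc hTDB (hwcont.mono (fun z hz => hz.1))
  -- the convolution against w tends to zero
  have hG : Tendsto (fun t => ∫ s in (0:ℝ)..t, TD (t - s) (w s)) atTop (nhds 0) := by
    rw [NormedAddCommGroup.tendsto_nhds_zero]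
    intro e he
    set δ : ℝ := e * (-ε) / (2 * M) with hδdef
    have hδpos : 0 < δ := by
      apply div_pos (by nlinarith) (by nlinarith)
    obtain ⟨T₀, hT₀0, hT₀⟩ : ∃ T₀ : ℝ, 0 ≤ T₀ ∧ ∀ s : ℝ, T₀ ≤ s → ‖w s‖ ≤ δ := by
      have h1 : ∀ᶠ s in atTop, ‖w s‖ < δ := by
        have := hwc.norm
        simp only [norm_zero] at this
        exact this.eventually_lt_const hδpos
      obtain ⟨T₀', hT₀'⟩ := eventually_atTop.1 h1
      exact ⟨max T₀' 0, le_max_right _ _,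
        fun s hs => le_of_lt (hT₀' s (le_trans (le_max_left _ _) hs))⟩
    -- the first piece tends to 0
    have hp1 : Tendsto (fun t : ℝ => M * K * Real.exp (ε * (t - T₀)) * T₀) atTop (nhds 0) := by
      have hexp : Tendsto (fun t : ℝ => Real.exp (ε * (t - T₀))) atTop (nhds 0) := by
        refine Real.tendsto_exp_atBot.comp ?_
        exact (tendsto_const_mul_atBot_of_neg hε).2
          (tendsto_atTop_add_const_right atTop (-T₀) tendsto_id)
      have := (hexp.const_mul (M * K)).mul_const T₀
      simpa using this
    have hp1e : ∀ᶠ t in atTop, M * K * Real.exp (ε * (t - T₀)) * T₀ < e / 2 :=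
      hp1.eventually_lt_const (by linarith)
    filter_upwards [hp1e, eventually_ge_atTop T₀] with t hp1t hTt
    have ht0 : (0:ℝ) ≤ t := le_trans hT₀0 hTt
    have hcont := hGcont t ht0
    have intA : IntervalIntegrable (fun s => TD (t - s) (w s)) MeasureTheory.volume 0 T₀ :=
      ((hcont.mono (Set.Icc_subset_Icc le_rfl hTt)).mono
        (Set.uIcc_of_le hT₀0).subset).intervalIntegrable
    have intB : IntervalIntegrable (fun s => TD (t - s) (w s)) MeasureTheory.volume T₀ t :=
      ((hcont.mono (Set.Icc_subset_Icc hT₀0 le_rfl)).mono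
        (Set.uIcc_of_le hTt).subset).intervalIntegrable
    have hsplit : (∫ s in (0:ℝ)..t, TD (t - s) (w s)) =
        (∫ s in (0:ℝ)..T₀, TD (t - s) (w s)) + ∫ s in T₀..t, TD (t - s) (w s) :=
      (intervalIntegral.integral_add_adjacent_intervals intA intB).symm
    -- bound piece 1
    have hb1 : ‖∫ s in (0:ℝ)..T₀, TD (t - s) (w s)‖ ≤
        M * K * Real.exp (ε * (t - T₀)) * T₀ := by
      have h := intervalIntegral.norm_integral_le_of_norm_le_const
        (a := 0) (b := T₀) (C := M * K * Real.exp (ε * (t - T₀)))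
        (f := fun s => TD (t - s) (w s)) ?_
      · simpa [abs_of_nonneg hT₀0] using h
      · intro s hs
        rw [Set.uIoc_of_le hT₀0] at hs
        have hs0 : 0 ≤ s := le_of_lt hs.1
        have hst : s ≤ t := le_trans hs.2 hTt
        have hexps : Real.exp (ε * (t - s)) ≤ Real.exp (ε * (t - T₀)) := by
          apply Real.exp_le_exp.2
          nlinarith [hs.2]
        calc ‖TD (t - s) (w s)‖ ≤ ‖TD (t - s)‖ * ‖w s‖ := (TD (t - s)).le_opNorm _
          _ ≤ (M * Real.exp (ε * (t - s))) * K := by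
              apply mul_le_mul (hTDb _ (by linarith)) (hKb s hs0) (norm_nonneg _)
              positivity
          _ = M * K * Real.exp (ε * (t - s)) := by ring
          _ ≤ M * K * Real.exp (ε * (t - T₀)) :=
              mul_le_mul_of_nonneg_left hexps (by positivity)
    -- bound piece 2
    have hb2 : ‖∫ s in T₀..t, TD (t - s) (w s)‖ ≤ e / 2 := by
      have hint2 : IntervalIntegrable (fun s => M * δ * Real.exp (ε * (t - s)))
          MeasureTheory.volume T₀ t := by
        exact (continuous_const.mul (Real.continuous_exp.comp
          (continuous_const.mul (continuous_const.sub continuous_id)))).intervalIntegrable _ _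
      have h := intervalIntegral.norm_integral_le_of_norm_le
        (f := fun s => TD (t - s) (w s)) (g := fun s => M * δ * Real.exp (ε * (t - s)))
        (μ := MeasureTheory.volume) (a := T₀) (b := t) hTt ?_ hint2
      · refine h.trans ?_
        -- compute the integral of the bound
        have hcomp : (∫ s in T₀..t, Real.exp (ε * (t - s))) =
            ∫ u in (0:ℝ)..(t - T₀), Real.exp (ε * u) := by
          have := intervalIntegral.integral_comp_sub_left
            (a := T₀) (b := t) (fun u => Real.exp (ε * u)) t
          simpa using this
        have hεne : ε ≠ 0 := ne_of_lt hε
        have hval : (∫ u in (0:ℝ)..(t - T₀), Real.exp (ε * u)) =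
            ε⁻¹ * (Real.exp (ε * (t - T₀)) - 1) := by
          rw [intervalIntegral.integral_comp_mul_left (fun u => Real.exp u) hεne]
          simp [integral_exp, smul_eq_mul]
        have hexp1 : Real.exp (ε * (t - T₀)) ≤ 1 :=
          Real.exp_le_one_iff.2 (by nlinarith)
        have hexp0 : 0 < Real.exp (ε * (t - T₀)) := Real.exp_pos _
        have hIval : (∫ s in T₀..t, M * δ * Real.exp (ε * (t - s))) =
            M * δ * (ε⁻¹ * (Real.exp (ε * (t - T₀)) - 1)) := by
          rw [intervalIntegral.integral_const_mul, hcomp, hval]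
        have hεinv : 0 < -ε := by linarith
        have hnonneg : 0 ≤ M * δ * (ε⁻¹ * (Real.exp (ε * (t - T₀)) - 1)) := by
          have hinvneg : ε⁻¹ < 0 := inv_lt_zero.2 hε
          have h2 : 0 ≤ ε⁻¹ * (Real.exp (ε * (t - T₀)) - 1) := by nlinarith
          positivity
        have hle : M * δ * (ε⁻¹ * (Real.exp (ε * (t - T₀)) - 1)) ≤ M * δ * (-ε)⁻¹ := by
          apply mul_le_mul_of_nonneg_left _ (by positivity)
          rw [← neg_neg ε⁻¹, ← inv_neg]
          rw [neg_mul, ← mul_neg, neg_sub]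
          apply mul_le_of_le_one_right (le_of_lt (by positivity))
          linarith
        have hfinal : M * δ * (-ε)⁻¹ = e / 2 := by
          rw [hδdef]
          field_simp
        rw [hIval] at *
        linarith
      · rw [← MeasureTheory.ae_restrict_iff' measurableSet_Ioc, ← Set.uIoc_of_le hTt]
        filter_upwards [MeasureTheory.ae_restrict_mem measurableSet_uIoc] with s hs
        rw [Set.uIoc_of_le hTt] at hs
        have hs0 : 0 ≤ s := le_trans hT₀0 (le_of_lt hs.1)
        calc ‖TD (t - s) (w s)‖ ≤ ‖TD (t - s)‖ * ‖w s‖ := (TD (t - s)).le_opNorm _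
          _ ≤ (M * Real.exp (ε * (t - s))) * δ := by
              apply mul_le_mul (hTDb _ (by linarith [hs.2])) (hT₀ s (le_of_lt hs.1))
                (norm_nonneg _)
              positivity
          _ = M * δ * Real.exp (ε * (t - s)) := by ring
    calc ‖∫ s in (0:ℝ)..t, TD (t - s) (w s)‖ ≤
        ‖∫ s in (0:ℝ)..T₀, TD (t - s) (w s)‖ + ‖∫ s in T₀..t, TD (t - s) (w s)‖ := by
          rw [hsplit]; exact norm_add_le _ _
      _ < e / 2 + e / 2 := by
          apply add_lt_add_of_lt_of_le (lt_of_le_of_lt hb1 hp1t) hb2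
      _ = e := by ring
  -- the constant part
  have hCl : Tendsto (fun t => Dinv (TD t (C ℓ))) atTop (nhds 0) := by
    have h1 := aux_tendsto_TD_zero hε hTDb (C ℓ)
    have h2 := (Dinv.continuous.tendsto 0).comp h1
    simpa [Function.comp_def] using h2
  -- decomposition, valid for t ≥ 0
  have heq : (fun t => ∫ s in (0:ℝ)..t, TD (t - s) (C (TA s x))) =ᶠ[atTop]
      fun t => (∫ s in (0:ℝ)..t, TD (t - s) (w s)) + (Dinv (TD t (C ℓ)) - Dinv (C ℓ)) := by
    filter_upwards [eventually_ge_atTop (0:ℝ)] with t ht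
    have int1 : IntervalIntegrable (fun s => TD (t - s) (w s)) MeasureTheory.volume 0 t :=
      ((hGcont t ht).mono (Set.uIcc_of_le ht).subset).intervalIntegrable
    have int2 : IntervalIntegrable (fun s => TD (t - s) (C ℓ)) MeasureTheory.volume 0 t :=
      ((aux_contOn_conv hTDc hTDB (f := fun _ => C ℓ) (t := t) continuousOn_const).mono
        (Set.uIcc_of_le ht).subset).intervalIntegrable
    have hpt : (fun s => TD (t - s) (C (TA s x))) =
        fun s => TD (t - s) (w s) + TD (t - s) (C ℓ) := by
      funext s
      rw [hwdef]
      simp only [map_sub]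
      abel
    rw [hpt, intervalIntegral.integral_add int1 int2]
    congr 1
    have hsub : (∫ s in (0:ℝ)..t, TD (t - s) (C ℓ)) = ∫ σ in (0:ℝ)..t, TD σ (C ℓ) := by
      have := intervalIntegral.integral_comp_sub_left (a := 0) (b := t)
        (fun σ => TD σ (C ℓ)) t
      simpa using this
    rw [hsub, aux_integral_TD_eq hD hinv₁ (C ℓ) ht]
  have hfin : Tendsto (fun t => (∫ s in (0:ℝ)..t, TD (t - s) (w s)) +
      (Dinv (TD t (C ℓ)) - Dinv (C ℓ))) atTop (nhds (0 + (0 - Dinv (C ℓ)))) :=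
    hG.add (hCl.sub tendsto_const_nhds)
  rw [show (0:Y) + (0 - Dinv (C ℓ)) = -(Dinv (C ℓ)) by abel] at hfin
  exact Tendsto.congr' heq.symm hfin
end
end

section
/- Let A, D generate C₀-semigroups with ‖e^{tA}‖ ≤ M₁ e^{ε₁ t}, ‖e^{tD}‖ ≤ M₂ e^{ε₂ t}, ε₁, ε₂ < 0, and let B ∈ L(Y, X), C ∈ L(X, Y) with M₁ M₂ ‖B‖ ‖C‖ < ε₁ ε₂. Then the C₀-semigroup generated by the full matrix 𝐀 = [[A, B],[C, D]] with domain D(A) × D(D) on X × Y is uniformly exponentially stable. -/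
open MeasureTheory Set Filter Real

noncomputable section

variable {X Y : Type*} [NormedAddCommGroup X] [NormedSpace ℝ X] [CompleteSpace X]
  [NormedAddCommGroup Y] [NormedSpace ℝ Y] [CompleteSpace Y]

section Aux

variable {E : Type*} [NormedAddCommGroup E] [NormedSpace ℝ E]

/-- the renormed (Feller) norm adapted to the semigroup -/
def snorm' (T : ℝ → E →L[ℝ] E) (ε : ℝ) (y : E) : ℝ :=
  ⨆ s : Ici (0:ℝ), Real.exp (-(ε * s)) * ‖T s y‖

variable {T : ℝ → E →L[ℝ] E} {M ε : ℝ}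

theorem snorm_bdd (hb : ∀ t : ℝ, 0 ≤ t → ‖T t‖ ≤ M * Real.exp (ε * t)) (y : E) :
    ∀ s : Ici (0:ℝ), Real.exp (-(ε * s)) * ‖T s y‖ ≤ M * ‖y‖ := by
  rintro ⟨s, hs⟩
  have h1 : ‖T s y‖ ≤ (M * Real.exp (ε * s)) * ‖y‖ :=
    le_trans ((T s).le_opNorm y) (by
      exact mul_le_mul_of_nonneg_right (hb s hs) (norm_nonneg y))
  calc Real.exp (-(ε * s)) * ‖T s y‖ ≤ Real.exp (-(ε * s)) * ((M * Real.exp (ε * s)) * ‖y‖) :=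
        mul_le_mul_of_nonneg_left h1 (Real.exp_pos _).le
    _ = (Real.exp (-(ε * s)) * Real.exp (ε * s)) * (M * ‖y‖) := by ring
    _ = M * ‖y‖ := by rw [← Real.exp_add]; simp

theorem snorm_bddAbove (hb : ∀ t : ℝ, 0 ≤ t → ‖T t‖ ≤ M * Real.exp (ε * t)) (y : E) :
    BddAbove (range fun s : Ici (0:ℝ) => Real.exp (-(ε * s)) * ‖T s y‖) :=
  ⟨M * ‖y‖, by rintro _ ⟨s, rfl⟩; exact snorm_bdd hb y s⟩

theorem le_snorm (hT : IsC0Semigroup T) (hb : ∀ t : ℝ, 0 ≤ t → ‖T t‖ ≤ M * Real.exp (ε * t))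
    (y : E) : ‖y‖ ≤ snorm' T ε y := by
  have := le_ciSup (snorm_bddAbove hb y) (⟨0, self_mem_Ici⟩ : Ici (0:ℝ))
  simpa [hT.1, snorm'] using this

theorem snorm_le (hb : ∀ t : ℝ, 0 ≤ t → ‖T t‖ ≤ M * Real.exp (ε * t)) (y : E) :
    snorm' T ε y ≤ M * ‖y‖ :=
  ciSup_le (snorm_bdd hb y)

theorem snorm_nonneg' (hT : IsC0Semigroup T)
    (hb : ∀ t : ℝ, 0 ≤ t → ‖T t‖ ≤ M * Real.exp (ε * t)) (y : E) : 0 ≤ snorm' T ε y :=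
  le_trans (norm_nonneg y) (le_snorm hT hb y)

theorem snorm_add_le (hb : ∀ t : ℝ, 0 ≤ t → ‖T t‖ ≤ M * Real.exp (ε * t)) (y z : E) :
    snorm' T ε (y + z) ≤ snorm' T ε y + snorm' T ε z := by
  refine ciSup_le fun s => ?_
  have : Real.exp (-(ε * s)) * ‖T s (y + z)‖ ≤
      Real.exp (-(ε * s)) * ‖T s y‖ + Real.exp (-(ε * s)) * ‖T s z‖ := by
    rw [← mul_add]
    exact mul_le_mul_of_nonneg_left (by rw [map_add]; exact norm_add_le _ _) (Real.exp_pos _).le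
  exact le_trans this (add_le_add (le_ciSup (snorm_bddAbove hb y) s)
    (le_ciSup (snorm_bddAbove hb z) s))

theorem snorm_sub_le (hb : ∀ t : ℝ, 0 ≤ t → ‖T t‖ ≤ M * Real.exp (ε * t)) (y z : E) :
    snorm' T ε y ≤ snorm' T ε z + M * ‖y - z‖ := by
  have h := snorm_add_le hb z (y - z)
  simp only [add_sub_cancel] at h
  exact le_trans h (by gcongr; exact snorm_le hb _)

theorem snorm_semigroup (hT : IsC0Semigroup T)
    (hb : ∀ t : ℝ, 0 ≤ t → ‖T t‖ ≤ M * Real.exp (ε * t)) (y : E) {h : ℝ} (hh : 0 ≤ h) :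
    snorm' T ε (T h y) ≤ Real.exp (ε * h) * snorm' T ε y := by
  refine ciSup_le ?_
  rintro ⟨s, hs⟩
  have h1 : T s (T h y) = T (s + h) y := by
    rw [hT.2.1 s h hs hh]; rfl
  have h2 : Real.exp (-(ε * s)) = Real.exp (ε * h) * Real.exp (-(ε * (s + h))) := by
    rw [← Real.exp_add]; ring_nf
  calc Real.exp (-(ε * s)) * ‖T s (T h y)‖
      = Real.exp (ε * h) * (Real.exp (-(ε * (s + h))) * ‖T (s + h) y‖) := by
        rw [h1, h2]; ring
    _ ≤ Real.exp (ε * h) * snorm' T ε y := by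
        refine mul_le_mul_of_nonneg_left ?_ (Real.exp_pos _).le
        exact le_ciSup (snorm_bddAbove hb y) (⟨s + h, add_nonneg hs hh⟩ : Ici (0:ℝ))

theorem snorm_lipschitz (hM : 1 ≤ M) (hb : ∀ t : ℝ, 0 ≤ t → ‖T t‖ ≤ M * Real.exp (ε * t)) :
    LipschitzWith (Real.toNNReal M) (snorm' T ε) := by
  refine LipschitzWith.of_dist_le_mul fun y z => ?_
  rw [Real.dist_eq, dist_eq_norm, Real.coe_toNNReal M (by linarith)]
  rw [abs_sub_le_iff]
  constructor
  · linarith [snorm_sub_le hb y z]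
  · rw [norm_sub_rev]
    linarith [snorm_sub_le hb z y]

end Aux
section Gen
variable {E : Type*} [NormedAddCommGroup E] [NormedSpace ℝ E]
  {dom : Set E} {A : E → E} {T : ℝ → E →L[ℝ] E}

theorem gen_orbit_deriv (hG : Generates dom A T) {x : E} (hx : x ∈ dom) {t : ℝ} (ht : 0 ≤ t) :
    HasDerivWithinAt (fun s => T s x) (T t (A x)) (Ici t) t := by
  have h0 : HasDerivWithinAt (fun h => T h x) (A x) (Ici 0) 0 := hG.2.2 x hx
  have hsub : HasDerivWithinAt (fun s : ℝ => s - t) (1:ℝ) (Ici t) t :=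
    (hasDerivWithinAt_id t (Ici t)).sub_const t
  have hcomp : HasDerivWithinAt ((fun h => T h x) ∘ fun s => s - t) ((1:ℝ) • A x) (Ici t) t :=
    HasDerivWithinAt.scomp_of_eq (hg := h0) (hh := hsub)
      (hst := fun s hs => Set.mem_Ici.2 (sub_nonneg.2 hs)) (hy := by simp)
  have hlin : HasDerivWithinAt ((T t) ∘ ((fun h => T h x) ∘ fun s => s - t))
      (T t ((1:ℝ) • A x)) (Ici t) t :=
    (T t).hasFDerivAt.comp_hasDerivWithinAt _ hcomp
  simp only [one_smul] at hlin
  refine hlin.congr (fun s hs => ?_) ?_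
  · show T s x = T t (T (s - t) x)
    have : T s = T (t + (s - t)) := by ring_nf
    rw [this, hG.1.2.1 t (s - t) ht (sub_nonneg.2 hs)]; rfl
  · show T t x = T t (T (t - t) x)
    simp [hG.1.1]

theorem gen_invariant (hG : Generates dom A T) {x : E} (hx : x ∈ dom) {t : ℝ} (ht : 0 ≤ t) :
    T t x ∈ dom ∧ A (T t x) = T t (A x) := by
  have h0 : HasDerivWithinAt (fun h => T h x) (A x) (Ici 0) 0 := hG.2.2 x hx
  have hlin : HasDerivWithinAt ((T t) ∘ fun h => T h x) (T t (A x)) (Ici 0) 0 :=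
    (T t).hasFDerivAt.comp_hasDerivWithinAt _ h0
  have key : HasDerivWithinAt (fun h => T h (T t x)) (T t (A x)) (Ici 0) 0 := by
    refine hlin.congr (fun h hh => ?_) ?_
    · show T h (T t x) = T t (T h x)
      have e1 : T (h + t) = (T h).comp (T t) := hG.1.2.1 h t hh ht
      have e2 : T (t + h) = (T t).comp (T h) := hG.1.2.1 t h ht hh
      have : T (h + t) x = T (t + h) x := by rw [add_comm]
      rw [e1, e2] at this
      exact this
    · show T 0 (T t x) = T t (T 0 x)
      simp [hG.1.1]
  have hmem : T t x ∈ dom := (hG.2.1 _).mpr ⟨_, key⟩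
  refine ⟨hmem, ?_⟩
  exact UniqueDiffWithinAt.eq_deriv _ (uniqueDiffOn_Ici 0 0 self_mem_Ici) (hG.2.2 _ hmem) key

end Gen

section Slope
variable {E : Type*} [NormedAddCommGroup E] [NormedSpace ℝ E]
  {dom : Set E} {A : E → E} {T : ℝ → E →L[ℝ] E} {M ε : ℝ}

theorem tendsto_sub_Ioi (t : ℝ) : Tendsto (fun z => z - t) (nhdsWithin t (Ioi t)) (nhdsWithin 0 (Ioi 0)) := by
  apply tendsto_nhdsWithin_of_tendsto_nhds_of_eventually_within
  · have : Tendsto (fun z => z - t) (nhds t) (nhds (t - t)) :=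
      (continuous_id.sub continuous_const).tendsto t
    rw [sub_self] at this
    exact this.mono_left nhdsWithin_le_nhds
  · exact eventually_mem_nhdsWithin.mono fun z hz => Set.mem_Ioi.2 (sub_pos.2 hz)

theorem exp_slope_tendsto (ε t : ℝ) :
    Tendsto (fun z => (z - t)⁻¹ * (Real.exp (ε * (z - t)) - 1)) (nhdsWithin t (Ioi t)) (nhds ε) := by
  have hd : HasDerivAt (fun s : ℝ => Real.exp (ε * s)) ε 0 := by
    have := ((hasDerivAt_id (0:ℝ)).const_mul ε).exp
    simpa using this
  rw [hasDerivAt_iff_tendsto_slope] at hd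
  have hsub : Tendsto (fun z => z - t) (nhdsWithin t (Ioi t)) (nhdsWithin 0 ({(0:ℝ)}ᶜ)) :=
    (tendsto_sub_Ioi t).mono_right (nhdsWithin_mono 0 fun z hz => ne_of_gt hz)
  have := hd.comp hsub
  refine this.congr fun z => ?_
  simp [slope_def_field, Function.comp]
  ring_nf

theorem snorm_slope_aux (hG : Generates dom A T) (hM : 1 ≤ M)
    (hb : ∀ t : ℝ, 0 ≤ t → ‖T t‖ ≤ M * Real.exp (ε * t))
    (v : ℝ → E) (t : ℝ) (hy : v t ∈ dom) (q : E)
    (hv : Tendsto (fun z => (z - t)⁻¹ • (v z - v t)) (nhdsWithin t (Ioi t)) (nhds (A (v t) + q))) :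
    ∃ g : ℝ → ℝ,
      (∀ᶠ z in nhdsWithin t (Ioi t),
        snorm' T ε (v z) - snorm' T ε (v t) ≤ (z - t) * g z) ∧
      Tendsto g (nhdsWithin t (Ioi t)) (nhds (ε * snorm' T ε (v t) + M * ‖q‖)) := by
  set y := v t with hy_def
  -- error of the semigroup expansion
  have hTA : Tendsto (fun z => (z - t)⁻¹ • (T (z - t) y - y)) (nhdsWithin t (Ioi t)) (nhds (A y)) := by
    have h0 : HasDerivWithinAt (fun h => T h y) (A y) (Ici 0) 0 := hG.2.2 y hy
    rw [hasDerivWithinAt_iff_tendsto_slope, Ici_sdiff_left] at h0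
    have := h0.comp (tendsto_sub_Ioi t)
    refine this.congr fun z => ?_
    simp [slope, Function.comp, hG.1.1]
  set err : ℝ → E := fun z => (z - t)⁻¹ • (v z - y) - (A y + q) with herr_def
  set errT : ℝ → E := fun z => (z - t)⁻¹ • (T (z - t) y - y) - A y with herrT_def
  have herr : Tendsto err (nhdsWithin t (Ioi t)) (nhds 0) := by
    rw [show (0:E) = (A y + q) - (A y + q) by simp]
    exact hv.sub tendsto_const_nhds
  have herrT : Tendsto errT (nhdsWithin t (Ioi t)) (nhds 0) := by
    rw [show (0:E) = A y - A y by simp]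
    exact hTA.sub tendsto_const_nhds
  refine ⟨fun z => ((z - t)⁻¹ * (Real.exp (ε * (z - t)) - 1)) * snorm' T ε y
      + M * ‖q + err z - errT z‖, ?_, ?_⟩
  · refine eventually_mem_nhdsWithin.mono fun z hz => ?_
    have hzt : t < z := hz
    have hzne : z - t ≠ 0 := ne_of_gt (sub_pos.2 hzt)
    have hzpos : 0 < z - t := sub_pos.2 hzt
    -- key algebraic identity
    have key : v z - T (z - t) y = (z - t) • (q + err z - errT z) := by
      rw [herr_def, herrT_def]
      show v z - T (z - t) y = (z - t) • (q + ((z - t)⁻¹ • (v z - y) - (A y + q))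
        - ((z - t)⁻¹ • (T (z - t) y - y) - A y))
      match_scalars <;> field_simp <;> ring
    have hsplit : snorm' T ε (v z) ≤ Real.exp (ε * (z - t)) * snorm' T ε y
        + (z - t) * (M * ‖q + err z - errT z‖) := by
      have h1 : v z = T (z - t) y + (v z - T (z - t) y) := by abel
      calc snorm' T ε (v z) = snorm' T ε (T (z - t) y + (v z - T (z - t) y)) := by rw [← h1]
        _ ≤ snorm' T ε (T (z - t) y) + snorm' T ε (v z - T (z - t) y) := snorm_add_le hb _ _
        _ ≤ Real.exp (ε * (z - t)) * snorm' T ε y + M * ‖v z - T (z - t) y‖ :=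
            add_le_add (snorm_semigroup hG.1 hb y hzpos.le) (snorm_le hb _)
        _ = Real.exp (ε * (z - t)) * snorm' T ε y + (z - t) * (M * ‖q + err z - errT z‖) := by
            rw [key, norm_smul, Real.norm_eq_abs, abs_of_pos hzpos]; ring
    have hexp : (Real.exp (ε * (z - t)) - 1) * snorm' T ε y
        = (z - t) * (((z - t)⁻¹ * (Real.exp (ε * (z - t)) - 1)) * snorm' T ε y) := by
      field_simp
    nlinarith [hsplit, hexp]
  · have h1 : Tendsto (fun z => ((z - t)⁻¹ * (Real.exp (ε * (z - t)) - 1)) * snorm' T ε y)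
        (nhdsWithin t (Ioi t)) (nhds (ε * snorm' T ε y)) :=
      (exp_slope_tendsto ε t).mul_const _
    have h2 : Tendsto (fun z => M * ‖q + err z - errT z‖) (nhdsWithin t (Ioi t)) (nhds (M * ‖q‖)) := by
      have hq : Tendsto (fun z => q + err z - errT z) (nhdsWithin t (Ioi t)) (nhds (q + 0 - 0)) :=
        (Tendsto.add (tendsto_const_nhds (x := q)) herr).sub herrT
      rw [add_zero, sub_zero] at hq
      exact (hq.norm).const_mul M
    exact h1.add h2

end Slope

section Dense
variable {E : Type*} [NormedAddCommGroup E] [NormedSpace ℝ E] [CompleteSpace E]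
  {dom : Set E} {A : E → E} {T : ℝ → E →L[ℝ] E}

theorem gen_dense_bound (hG : Generates dom A T) {K ω : ℝ}
    (hcore : ∀ q ∈ dom, ∀ t : ℝ, 0 ≤ t → ‖T t q‖ ≤ K * Real.exp (ω * t) * ‖q‖) :
    ∀ p : E, ∀ t : ℝ, 0 ≤ t → ‖T t p‖ ≤ K * Real.exp (ω * t) * ‖p‖ := by
  intro p t ht
  set g : ℝ → E := fun s => T s p with hg_def
  have hgc : ContinuousOn g (Ici 0) := hG.1.2.2 p
  have hint : ∀ a b : ℝ, 0 ≤ a → a ≤ b → IntervalIntegrable g volume a b := by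
    intro a b ha hab
    apply ContinuousOn.intervalIntegrable
    rw [uIcc_of_le hab]
    exact hgc.mono fun x hx => le_trans ha hx.1
  set G : ℝ → E := fun r => ∫ s in (0:ℝ)..r, g s with hGdef
  have hGd : ∀ b : ℝ, 0 ≤ b → HasDerivWithinAt G (g b) (Ici b) b := by
    intro b hb
    have hmeas : StronglyMeasurableAtFilter g (nhdsWithin b (Ioi b)) volume :=
      ⟨Ici 0, mem_of_superset self_mem_nhdsWithin (fun z hz => le_trans hb (le_of_lt hz)),
        hgc.aestronglyMeasurable measurableSet_Ici⟩
    have hcont : ContinuousWithinAt g (Ioi b) b :=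
      (hgc b hb).mono fun z hz => le_trans hb (le_of_lt hz)
    exact intervalIntegral.integral_hasDerivWithinAt_right (hint 0 b le_rfl hb) hmeas hcont
  have hmem : ∀ h : ℝ, 0 < h → (h⁻¹ • G h) ∈ dom := by
    intro h hh
    have heq : ∀ s ∈ Ici (0:ℝ), T s (h⁻¹ • G h) = h⁻¹ • (G (s + h) - G s) := by
      intro s hs
      have hs' : (0:ℝ) ≤ s := hs
      have e1 : T s (G h) = ∫ σ in (0:ℝ)..h, T s (g σ) :=
        ((T s).intervalIntegral_comp_comm (hint 0 h le_rfl hh.le)).symm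
      have e2 : (∫ σ in (0:ℝ)..h, T s (g σ)) = ∫ σ in (0:ℝ)..h, g (s + σ) := by
        apply intervalIntegral.integral_congr
        intro σ hσ
        rw [uIcc_of_le hh.le] at hσ
        show T s (g σ) = g (s + σ)
        show T s (T σ p) = T (s + σ) p
        rw [hG.1.2.1 s σ hs hσ.1]; rfl
      have e3 : (∫ σ in (0:ℝ)..h, g (s + σ)) = ∫ σ in (s + 0)..(s + h), g σ :=
        intervalIntegral.integral_comp_add_left g s
      have e4 : G (s + h) - G s = ∫ σ in s..(s + h), g σ :=
        intervalIntegral.integral_interval_sub_left (hint 0 (s + h) le_rfl (by linarith))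
          (hint 0 s le_rfl hs)
      rw [(T s).map_smul, e1, e2, e3, e4, add_zero]
    have hadd : HasDerivWithinAt (fun s : ℝ => s + h) (1:ℝ) (Ici 0) 0 :=
      (hasDerivWithinAt_id 0 (Ici 0)).add_const h
    have d1 : HasDerivWithinAt (fun s => G (s + h)) ((1:ℝ) • g h) (Ici 0) 0 :=
      HasDerivWithinAt.scomp_of_eq (hg := hGd h hh.le) (hh := hadd)
        (hst := fun s hs => Set.mem_Ici.2 (le_add_of_nonneg_left hs)) (hy := (zero_add h).symm)
    have d2 : HasDerivWithinAt G (g 0) (Ici 0) 0 := hGd 0 le_rfl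
    have d3 : HasDerivWithinAt (fun s => h⁻¹ • (G (s + h) - G s))
        (h⁻¹ • ((1:ℝ) • g h - g 0)) (Ici 0) 0 := (d1.sub d2).const_smul h⁻¹
    have d4 : HasDerivWithinAt (fun s => T s (h⁻¹ • G h))
        (h⁻¹ • ((1:ℝ) • g h - g 0)) (Ici 0) 0 :=
      d3.congr heq (heq 0 self_mem_Ici)
    exact (hG.2.1 _).mpr ⟨_, d4⟩
  have hg0 : g 0 = p := by
    show T 0 p = p
    rw [hG.1.1]; rfl
  have hx_tendsto : Tendsto (fun h : ℝ => h⁻¹ • G h) (nhdsWithin 0 (Ioi 0)) (nhds p) := by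
    have hd := hGd 0 le_rfl
    rw [hasDerivWithinAt_iff_tendsto_slope, Ici_sdiff_left, hg0] at hd
    refine hd.congr fun h => ?_
    have : G 0 = 0 := intervalIntegral.integral_same
    simp [slope, this]
  have h1 : Tendsto (fun h : ℝ => T t (h⁻¹ • G h)) (nhdsWithin 0 (Ioi 0)) (nhds (T t p)) :=
    ((T t).continuous.tendsto p).comp hx_tendsto
  have h2 : Tendsto (fun h : ℝ => K * Real.exp (ω * t) * ‖h⁻¹ • G h‖) (nhdsWithin 0 (Ioi 0))
      (nhds (K * Real.exp (ω * t) * ‖p‖)) := (hx_tendsto.norm).const_mul _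
  have hev : (fun h : ℝ => ‖T t (h⁻¹ • G h)‖) ≤ᶠ[nhdsWithin 0 (Ioi 0)]
      fun h : ℝ => K * Real.exp (ω * t) * ‖h⁻¹ • G h‖ :=
    eventually_mem_nhdsWithin.mono fun h hh => hcore _ (hmem h hh) t ht
  exact le_of_tendsto_of_tendsto h1.norm h2 hev

end Dense

set_option maxHeartbeats 2000000 in
/-- Stability of the semigroup generated by the complete operator matrix under the
smallness condition `M₁ M₂ ‖B‖ ‖C‖ < ε₁ ε₂`. -/
theorem complete_matrix_uniformly_exponentially_stable
    (domA : Set X) (A : X → X) (TA : ℝ → X →L[ℝ] X)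
    (domD : Set Y) (D : Y → Y) (TD : ℝ → Y →L[ℝ] Y)
    (B : Y →L[ℝ] X) (C : X →L[ℝ] Y) (M₁ M₂ ε₁ ε₂ : ℝ)
    (hA : Generates domA A TA) (hD : Generates domD D TD)
    (hM₁ : 1 ≤ M₁) (hM₂ : 1 ≤ M₂) (hε₁ : ε₁ < 0) (hε₂ : ε₂ < 0)
    (hTAb : ∀ t : ℝ, 0 ≤ t → ‖TA t‖ ≤ M₁ * Real.exp (ε₁ * t))
    (hTDb : ∀ t : ℝ, 0 ≤ t → ‖TD t‖ ≤ M₂ * Real.exp (ε₂ * t))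
    (hsmall : M₁ * M₂ * ‖B‖ * ‖C‖ < ε₁ * ε₂) :
    ∀ T : ℝ → (X × Y) →L[ℝ] (X × Y),
      Generates (domA ×ˢ domD) (fun p => (A p.1 + B p.2, C p.1 + D p.2)) T →
      ∃ N ω : ℝ, 1 ≤ N ∧ ω < 0 ∧ ∀ t : ℝ, 0 ≤ t → ‖T t‖ ≤ N * Real.exp (ω * t) := by
  intro T hT
  have hM₁0 : (0:ℝ) < M₁ := by linarith
  have hM₂0 : (0:ℝ) < M₂ := by linarith
  set bb := M₁ * ‖B‖ with hbb_def
  set cc := M₂ * ‖C‖ with hcc_def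
  have hbb0 : 0 ≤ bb := mul_nonneg hM₁0.le (norm_nonneg _)
  have hcc0 : 0 ≤ cc := mul_nonneg hM₂0.le (norm_nonneg _)
  have hbccc : bb * cc < ε₁ * ε₂ := by
    have : bb * cc = M₁ * M₂ * ‖B‖ * ‖C‖ := by rw [hbb_def, hcc_def]; ring
    linarith
  -- choose the decay rate ω and the weights α, β
  obtain ⟨ω, hω, hωε₁, hωε₂, hP⟩ :
      ∃ ω : ℝ, ω < 0 ∧ ε₁ < ω ∧ ε₂ < ω ∧ bb * cc < (ω - ε₁) * (ω - ε₂) := by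
    set m := max ε₁ ε₂ with hm_def
    have hm : m < 0 := max_lt hε₁ hε₂
    have hsum : (0:ℝ) < -ε₁ - ε₂ := by linarith
    set d := min (-(m / 2)) ((ε₁ * ε₂ - bb * cc) / (2 * (-ε₁ - ε₂))) with hd_def
    have hd : 0 < d := lt_min (by linarith) (div_pos (by linarith) (by linarith))
    have hd1 : d ≤ -(m / 2) := min_le_left _ _
    have hd2 : d * (2 * (-ε₁ - ε₂)) ≤ ε₁ * ε₂ - bb * cc :=
      (le_div_iff₀ (by linarith)).mp (min_le_right _ _)
    have hε₁m : ε₁ ≤ m := le_max_left _ _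
    have hε₂m : ε₂ ≤ m := le_max_right _ _
    exact ⟨-d, by linarith, by linarith, by linarith, by nlinarith [mul_pos hd hd]⟩
  obtain ⟨α, β, hαpos, hβpos, hc1, hc2⟩ :
      ∃ α β : ℝ, 0 < α ∧ 0 < β ∧ α * ε₁ + β * cc ≤ ω * α ∧ α * bb + β * ε₂ ≤ ω * β := by
    have hbb1 : (0:ℝ) < bb + 1 := by linarith
    set P := (ω - ε₁) * (ω - ε₂) with hP_def
    set Q := (P - bb * cc) / (bb + 1) with hQ_def
    have hQ : 0 < Q := div_pos (by linarith) hbb1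
    have hQeq : Q * (bb + 1) = P - bb * cc := div_mul_cancel₀ _ (ne_of_gt hbb1)
    refine ⟨cc + Q, ω - ε₁, by linarith, by linarith, ?_, ?_⟩
    · nlinarith [mul_nonneg (by linarith : (0:ℝ) ≤ ω - ε₁) hQ.le]
    · have h1 : (cc + Q) * bb = P - Q := by linear_combination hQeq
      nlinarith [hQ]
  -- the core decay estimate on the domain
  have hcore : ∀ q ∈ domA ×ˢ domD, ∀ t : ℝ, 0 ≤ t →
      ‖T t q‖ ≤ ((α * M₁ + β * M₂) / min α β) * Real.exp (ω * t) * ‖q‖ := by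
    intro q hq tt htt
    set φ1 : ℝ → ℝ := fun z => snorm' TA ε₁ ((T z q).1) with hφ1
    set φ2 : ℝ → ℝ := fun z => snorm' TD ε₂ ((T z q).2) with hφ2
    set ψ : ℝ → ℝ := fun z => α * φ1 z + β * φ2 z with hψ
    have hu : ContinuousOn (fun z => T z q) (Ici 0) := hT.1.2.2 q
    have hψc : ContinuousOn ψ (Icc 0 tt) := by
      have l1 : Continuous (snorm' TA ε₁) := (snorm_lipschitz hM₁ hTAb).continuous
      have l2 : Continuous (snorm' TD ε₂) := (snorm_lipschitz hM₂ hTDb).continuous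
      have c1 : ContinuousOn (fun z => (T z q).1) (Icc 0 tt) :=
        continuous_fst.comp_continuousOn (hu.mono Icc_subset_Ici_self)
      have c2 : ContinuousOn (fun z => (T z q).2) (Icc 0 tt) :=
        continuous_snd.comp_continuousOn (hu.mono Icc_subset_Ici_self)
      exact (continuousOn_const.mul (l1.comp_continuousOn c1)).add
        (continuousOn_const.mul (l2.comp_continuousOn c2))
    have hf' : ∀ x ∈ Ico 0 tt, ∀ r, ω * ψ x < r →
        ∃ᶠ z in nhdsWithin x (Ioi x), (z - x)⁻¹ * (ψ z - ψ x) < r := by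
      intro x hx r hr
      have hx0 : (0:ℝ) ≤ x := hx.1
      obtain ⟨hmemx, hcomm⟩ := gen_invariant hT hq hx0
      have hder : HasDerivWithinAt (fun z => T z q)
          (T x ((fun p : X × Y => (A p.1 + B p.2, C p.1 + D p.2)) q)) (Ici x) x :=
        gen_orbit_deriv hT hq hx0
      rw [hasDerivWithinAt_iff_tendsto_slope, Ici_sdiff_left, ← hcomm] at hder
      have hmem1 : (T x q).1 ∈ domA := (mem_prod.1 hmemx).1
      have hmem2 : (T x q).2 ∈ domD := (mem_prod.1 hmemx).2
      have hv1 : Tendsto (fun z => (z - x)⁻¹ • ((T z q).1 - (T x q).1)) (nhdsWithin x (Ioi x))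
          (nhds (A (T x q).1 + B ((T x q).2))) := by
        have h := (continuous_fst.tendsto _).comp hder
        refine h.congr fun z => ?_
        simp [slope, Function.comp]
      have hv2 : Tendsto (fun z => (z - x)⁻¹ • ((T z q).2 - (T x q).2)) (nhdsWithin x (Ioi x))
          (nhds (C ((T x q).1) + D (T x q).2)) := by
        have h := (continuous_snd.tendsto _).comp hder
        refine h.congr fun z => ?_
        simp [slope, Function.comp]
      have hv2' : Tendsto (fun z => (z - x)⁻¹ • ((T z q).2 - (T x q).2)) (nhdsWithin x (Ioi x))
          (nhds (D ((T x q).2) + C ((T x q).1))) := by rw [add_comm] at hv2; exact hv2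
      obtain ⟨g₁, hg₁ev, hg₁t⟩ := snorm_slope_aux hA hM₁ hTAb (fun z => (T z q).1) x hmem1
        (B ((T x q).2)) hv1
      obtain ⟨g₂, hg₂ev, hg₂t⟩ := snorm_slope_aux hD hM₂ hTDb (fun z => (T z q).2) x hmem2
        (C ((T x q).1)) hv2'
      have hφ1x : 0 ≤ φ1 x := snorm_nonneg' hA.1 hTAb _
      have hφ2x : 0 ≤ φ2 x := snorm_nonneg' hD.1 hTDb _
      have e1 : M₁ * ‖B ((T x q).2)‖ ≤ bb * φ2 x := by
        have h1 : ‖B ((T x q).2)‖ ≤ ‖B‖ * ‖(T x q).2‖ := B.le_opNorm _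
        have h2 : ‖(T x q).2‖ ≤ φ2 x := le_snorm hD.1 hTDb _
        have h3 : ‖B ((T x q).2)‖ ≤ ‖B‖ * φ2 x :=
          le_trans h1 (mul_le_mul_of_nonneg_left h2 (norm_nonneg B))
        calc M₁ * ‖B ((T x q).2)‖ ≤ M₁ * (‖B‖ * φ2 x) :=
              mul_le_mul_of_nonneg_left h3 hM₁0.le
          _ = bb * φ2 x := by rw [hbb_def]; ring
      have e2 : M₂ * ‖C ((T x q).1)‖ ≤ cc * φ1 x := by
        have h1 : ‖C ((T x q).1)‖ ≤ ‖C‖ * ‖(T x q).1‖ := C.le_opNorm _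
        have h2 : ‖(T x q).1‖ ≤ φ1 x := le_snorm hA.1 hTAb _
        have h3 : ‖C ((T x q).1)‖ ≤ ‖C‖ * φ1 x :=
          le_trans h1 (mul_le_mul_of_nonneg_left h2 (norm_nonneg C))
        calc M₂ * ‖C ((T x q).1)‖ ≤ M₂ * (‖C‖ * φ1 x) :=
              mul_le_mul_of_nonneg_left h3 hM₂0.le
          _ = cc * φ1 x := by rw [hcc_def]; ring
      have hlimle : α * (ε₁ * φ1 x + M₁ * ‖B ((T x q).2)‖)
          + β * (ε₂ * φ2 x + M₂ * ‖C ((T x q).1)‖) ≤ ω * ψ x := by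
        have hψx : ψ x = α * φ1 x + β * φ2 x := rfl
        rw [hψx]
        nlinarith [mul_le_mul_of_nonneg_right hc1 hφ1x, mul_le_mul_of_nonneg_right hc2 hφ2x,
          mul_le_mul_of_nonneg_left e1 hαpos.le, mul_le_mul_of_nonneg_left e2 hβpos.le]
      have hlim : Tendsto (fun z => α * g₁ z + β * g₂ z) (nhdsWithin x (Ioi x))
          (nhds (α * (ε₁ * φ1 x + M₁ * ‖B ((T x q).2)‖)
            + β * (ε₂ * φ2 x + M₂ * ‖C ((T x q).1)‖))) :=
        ((hg₁t.const_mul α).add (hg₂t.const_mul β))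
      have hlt : ∀ᶠ z in nhdsWithin x (Ioi x), α * g₁ z + β * g₂ z < r :=
        hlim.eventually_lt_const (lt_of_le_of_lt hlimle hr)
      have hev : ∀ᶠ z in nhdsWithin x (Ioi x), (z - x)⁻¹ * (ψ z - ψ x) < r := by
        filter_upwards [hg₁ev, hg₂ev, hlt, eventually_mem_nhdsWithin] with z h1 h2 h3 hz
        have hzx : 0 < z - x := sub_pos.2 hz
        have hsum : ψ z - ψ x ≤ (z - x) * (α * g₁ z + β * g₂ z) := by
          have e1' : φ1 z - φ1 x ≤ (z - x) * g₁ z := h1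
          have e2' : φ2 z - φ2 x ≤ (z - x) * g₂ z := h2
          have hψz : ψ z = α * φ1 z + β * φ2 z := rfl
          have hψx : ψ x = α * φ1 x + β * φ2 x := rfl
          rw [hψz, hψx]
          nlinarith [mul_le_mul_of_nonneg_left e1' hαpos.le,
            mul_le_mul_of_nonneg_left e2' hβpos.le]
        calc (z - x)⁻¹ * (ψ z - ψ x) ≤ (z - x)⁻¹ * ((z - x) * (α * g₁ z + β * g₂ z)) :=
              mul_le_mul_of_nonneg_left hsum (inv_nonneg.2 hzx.le)
          _ = α * g₁ z + β * g₂ z := by field_simp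
          _ < r := h3
      exact hev.frequently
    have hgr := le_gronwallBound_of_liminf_deriv_right_le (f := ψ) (f' := fun z => ω * ψ z)
      (δ := ψ 0) (K := ω) (ε := 0) (a := 0) (b := tt) hψc hf' le_rfl
      (fun z _ => by show ω * ψ z ≤ ω * ψ z + 0; linarith) tt (right_mem_Icc.2 htt)
    rw [gronwallBound_ε0, sub_zero] at hgr
    have hq0 : T 0 q = q := by rw [hT.1.1]; rfl
    have hψ0 : ψ 0 ≤ (α * M₁ + β * M₂) * ‖q‖ := by
      have b1 : φ1 0 ≤ M₁ * ‖q‖ := by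
        have : φ1 0 = snorm' TA ε₁ ((T 0 q).1) := rfl
        rw [this, hq0]
        exact le_trans (snorm_le hTAb _)
          (mul_le_mul_of_nonneg_left (norm_fst_le q) hM₁0.le)
      have b2 : φ2 0 ≤ M₂ * ‖q‖ := by
        have : φ2 0 = snorm' TD ε₂ ((T 0 q).2) := rfl
        rw [this, hq0]
        exact le_trans (snorm_le hTDb _)
          (mul_le_mul_of_nonneg_left (norm_snd_le q) hM₂0.le)
      have hψ0' : ψ 0 = α * φ1 0 + β * φ2 0 := rfl
      rw [hψ0']
      nlinarith [mul_le_mul_of_nonneg_left b1 hαpos.le, mul_le_mul_of_nonneg_left b2 hβpos.le]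
    have hmin : 0 < min α β := lt_min hαpos hβpos
    have hnorm : min α β * ‖T tt q‖ ≤ ψ tt := by
      have hφ1t : 0 ≤ φ1 tt := snorm_nonneg' hA.1 hTAb _
      have hφ2t : 0 ≤ φ2 tt := snorm_nonneg' hD.1 hTDb _
      have hn : ‖T tt q‖ = max ‖(T tt q).1‖ ‖(T tt q).2‖ := rfl
      rw [hn, mul_max_of_nonneg _ _ hmin.le]
      have hψt : ψ tt = α * φ1 tt + β * φ2 tt := rfl
      refine max_le ?_ ?_
      · have h1 : ‖(T tt q).1‖ ≤ φ1 tt := le_snorm hA.1 hTAb _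
        have : min α β * ‖(T tt q).1‖ ≤ α * φ1 tt :=
          mul_le_mul (min_le_left _ _) h1 (norm_nonneg _) hαpos.le
        rw [hψt]
        nlinarith [mul_nonneg hβpos.le hφ2t]
      · have h1 : ‖(T tt q).2‖ ≤ φ2 tt := le_snorm hD.1 hTDb _
        have : min α β * ‖(T tt q).2‖ ≤ β * φ2 tt :=
          mul_le_mul (min_le_right _ _) h1 (norm_nonneg _) hβpos.le
        rw [hψt]
        nlinarith [mul_nonneg hαpos.le hφ1t]
    have final : ‖T tt q‖ ≤ ((α * M₁ + β * M₂) * ‖q‖ * Real.exp (ω * tt)) / min α β := by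
      rw [le_div_iff₀ hmin]
      calc ‖T tt q‖ * min α β = min α β * ‖T tt q‖ := by ring
        _ ≤ ψ tt := hnorm
        _ ≤ ψ 0 * Real.exp (ω * tt) := hgr
        _ ≤ (α * M₁ + β * M₂) * ‖q‖ * Real.exp (ω * tt) :=
            mul_le_mul_of_nonneg_right hψ0 (Real.exp_pos _).le
    calc ‖T tt q‖ ≤ ((α * M₁ + β * M₂) * ‖q‖ * Real.exp (ω * tt)) / min α β := final
      _ = (α * M₁ + β * M₂) / min α β * Real.exp (ω * tt) * ‖q‖ := by ring
  have hall := gen_dense_bound hT hcore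
  set K := (α * M₁ + β * M₂) / min α β with hK_def
  have hK0 : 0 ≤ K := by
    apply div_nonneg _ (le_of_lt (lt_min hαpos hβpos))
    nlinarith
  refine ⟨max 1 K, ω, le_max_left _ _, hω, fun t ht => ?_⟩
  apply ContinuousLinearMap.opNorm_le_bound _
    (mul_nonneg (le_trans zero_le_one (le_max_left _ _)) (Real.exp_pos _).le)
  intro p
  calc ‖T t p‖ ≤ K * Real.exp (ω * t) * ‖p‖ := hall p t ht
    _ ≤ max 1 K * Real.exp (ω * t) * ‖p‖ := by
        have : K * Real.exp (ω * t) ≤ max 1 K * Real.exp (ω * t) :=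
          mul_le_mul_of_nonneg_right (le_max_right _ _) (Real.exp_pos _).le
        exact mul_le_mul_of_nonneg_right this (norm_nonneg p)
end
end

section
/- In the Dyson–Phillips series for the matrix semigroup, the iterates satisfy the L¹-estimates ‖S_k^{(11)}(·)x‖_{L¹(ℝ₊,X)} ≤ (M₁^{k+1} M₂^k ‖C‖^k ‖B‖^k)/(|ε₁|^{k+1} |ε₂|^k) ‖x‖ for all k ∈ ℕ and x ∈ X, where ‖e^{tA}‖ ≤ M₁ e^{ε₁ t}, ‖e^{tD}‖ ≤ M₂ e^{ε₂ t}, ε₁, ε₂ < 0. -/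
open MeasureTheory Set Filter Real Topology

noncomputable section

lemma aux_joint_cont {E F : Type*} [NormedAddCommGroup E] [NormedSpace ℝ E]
    [NormedAddCommGroup F] [NormedSpace ℝ F]
    (T : ℝ → E →L[ℝ] F) (M : ℝ)
    (hb : ∀ t : ℝ, 0 ≤ t → ‖T t‖ ≤ M)
    (hc : ∀ x : E, ContinuousOn (fun t => T t x) (Ici 0)) :
    ContinuousOn (fun p : ℝ × E => T p.1 p.2) (Ici 0 ×ˢ (univ : Set E)) := by
  intro p hp
  have hp1 : (0:ℝ) ≤ p.1 := hp.1
  have hfst : Tendsto (fun q : ℝ × E => q.1) (𝓝[Ici 0 ×ˢ (univ : Set E)] p) (𝓝[Ici 0] p.1) := by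
    apply tendsto_nhdsWithin_of_tendsto_nhds_of_eventually_within
    · exact (continuous_fst.tendsto p).mono_left nhdsWithin_le_nhds
    · filter_upwards [self_mem_nhdsWithin] with q hq using hq.1
  have h2 : Tendsto (fun q : ℝ × E => ‖T q.1 p.2 - T p.1 p.2‖)
      (𝓝[Ici 0 ×ˢ (univ : Set E)] p) (𝓝 0) := by
    have h3 : Tendsto (fun q : ℝ × E => T q.1 p.2) (𝓝[Ici 0 ×ˢ (univ : Set E)] p)
        (𝓝 (T p.1 p.2)) := Filter.Tendsto.comp (hc p.2 p.1 hp1) hfst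
    exact tendsto_iff_norm_sub_tendsto_zero.1 h3
  have hsnd : Tendsto (fun q : ℝ × E => M * ‖q.2 - p.2‖)
      (𝓝[Ici 0 ×ˢ (univ : Set E)] p) (𝓝 0) := by
    have h5 : Tendsto (fun q : ℝ × E => q.2 - p.2) (𝓝[Ici 0 ×ˢ (univ : Set E)] p) (𝓝 0) := by
      simpa using ((continuous_snd.tendsto p).mono_left
        (nhdsWithin_le_nhds (s := Ici 0 ×ˢ (univ : Set E)))).sub (tendsto_const_nhds (x := p.2))
    simpa using h5.norm.const_mul M
  rw [ContinuousWithinAt, tendsto_iff_norm_sub_tendsto_zero]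
  apply squeeze_zero' (Eventually.of_forall fun q => norm_nonneg _)
  · filter_upwards [self_mem_nhdsWithin] with q hq
    have hq1 : (0:ℝ) ≤ q.1 := hq.1
    calc ‖T q.1 q.2 - T p.1 p.2‖
        ≤ ‖T q.1 q.2 - T q.1 p.2‖ + ‖T q.1 p.2 - T p.1 p.2‖ :=
          norm_sub_le_norm_sub_add_norm_sub _ _ _
      _ ≤ M * ‖q.2 - p.2‖ + ‖T q.1 p.2 - T p.1 p.2‖ := by
          have e : ‖T q.1 q.2 - T q.1 p.2‖ = ‖T q.1 (q.2 - p.2)‖ := by rw [map_sub]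
          rw [e]
          have := (T q.1).le_opNorm (q.2 - p.2)
          have h4 : ‖T q.1‖ * ‖q.2 - p.2‖ ≤ M * ‖q.2 - p.2‖ :=
            mul_le_mul_of_nonneg_right (hb _ hq1) (norm_nonneg _)
          linarith
  · simpa using hsnd.add h2

lemma aux_exp_int {ε : ℝ} (hε : ε < 0) :
    IntegrableOn (fun t : ℝ => Real.exp (ε * t)) (Ioi (0:ℝ)) := by
  have := exp_neg_integrableOn_Ioi 0 (neg_pos.2 hε)
  simpa using this

lemma aux_exp_val {ε : ℝ} (hε : ε < 0) :
    (∫ t in Ioi (0:ℝ), Real.exp (ε * t)) = |ε|⁻¹ := by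
  have hd : ∀ x ∈ Ici (0:ℝ), HasDerivAt (fun t => Real.exp (ε * t) / ε) (Real.exp (ε * x)) x := by
    intro x _
    have h1 : HasDerivAt (fun t : ℝ => Real.exp (ε * t)) (Real.exp (ε * x) * ε) x := by
      simpa [mul_comm] using ((hasDerivAt_id x).const_mul ε).exp
    have := h1.div_const ε
    simpa [mul_div_assoc, div_self (ne_of_lt hε)] using this
  have ht : Tendsto (fun t => Real.exp (ε * t) / ε) atTop (𝓝 0) := by
    have h1 : Tendsto (fun t : ℝ => ε * t) atTop atBot := by
      simpa [mul_comm] using tendsto_id.const_mul_atTop_of_neg hε (f := fun t : ℝ => t)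
    have := (tendsto_exp_atBot.comp h1).div_const ε
    simpa using this
  have h2 := integral_Ioi_of_hasDerivAt_of_tendsto' hd (aux_exp_int hε) ht
  rw [h2, abs_of_neg hε, mul_zero, Real.exp_zero, zero_sub, inv_neg, one_div]

lemma conv_bound {E F : Type*} [NormedAddCommGroup E] [NormedSpace ℝ E]
    [NormedAddCommGroup F] [NormedSpace ℝ F] [CompleteSpace F]
    (f : ℝ → E) (Φ : ℝ → E → F) (φ : ℝ → ℝ)
    (hf_cont : ContinuousOn f (Ici 0)) (hf_int : IntegrableOn f (Ioi 0))
    (hΦ_cont : ContinuousOn (fun p : ℝ × E => Φ p.1 p.2) (Ici 0 ×ˢ (univ : Set E)))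
    (hφ_cont : ContinuousOn φ (Ici 0)) (hφ_int : IntegrableOn φ (Ioi 0))
    (hφ_nonneg : ∀ τ : ℝ, 0 ≤ τ → 0 ≤ φ τ)
    (hbound : ∀ τ : ℝ, 0 ≤ τ → ∀ y : E, ‖Φ τ y‖ ≤ φ τ * ‖y‖) :
    ContinuousOn (fun t => ∫ s in (0:ℝ)..t, Φ (t - s) (f s)) (Ici 0) ∧
    IntegrableOn (fun t => ∫ s in (0:ℝ)..t, Φ (t - s) (f s)) (Ioi 0) ∧
    (∫ t in Ioi (0:ℝ), ‖∫ s in (0:ℝ)..t, Φ (t - s) (f s)‖) ≤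
      (∫ τ in Ioi (0:ℝ), φ τ) * (∫ s in Ioi (0:ℝ), ‖f s‖) := by
  have hmax : Continuous fun τ : ℝ => max τ 0 := continuous_id.max continuous_const
  set f' : ℝ → E := fun s => f (max s 0) with hf'def
  have hf' : Continuous f' := hf_cont.comp_continuous hmax fun s => le_max_right s 0
  set φ' : ℝ → ℝ := fun τ => φ (max τ 0) with hφ'def
  have hφ' : Continuous φ' := hφ_cont.comp_continuous hmax fun s => le_max_right s 0
  have hφ'_nonneg : ∀ τ, 0 ≤ φ' τ := fun τ => hφ_nonneg _ (le_max_right τ 0)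
  set Φ' : ℝ × E → F := fun p => Φ (max p.1 0) p.2 with hΦ'def
  have hΦ'c : Continuous Φ' :=
    hΦ_cont.comp_continuous ((continuous_fst.max continuous_const).prodMk continuous_snd)
      fun p => ⟨mem_Ici.2 (le_max_right _ _), mem_univ _⟩
  set h : ℝ → F := fun t => ∫ s in (0:ℝ)..t, Φ (t - s) (f s) with hh
  set g : ℝ → ℝ := fun t => ∫ s in (0:ℝ)..t, φ' (t - s) * ‖f' s‖ with hgdef
  have hcongr : ∀ t ∈ Ici (0:ℝ), h t = ∫ s in (0:ℝ)..t, Φ' (t - s, f' s) := by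
    intro t ht
    apply intervalIntegral.integral_congr
    intro s hs
    rw [uIcc_of_le (mem_Ici.mp ht)] at hs
    have h1 : max s 0 = s := max_eq_left hs.1
    have h2 : max (t - s) 0 = t - s := max_eq_left (by linarith [hs.2])
    simp only [Φ', f', h1, h2]
  have hcont' : Continuous fun t : ℝ => ∫ s in (0:ℝ)..t, Φ' (t - s, f' s) := by
    apply intervalIntegral.continuous_parametric_intervalIntegral_of_continuous
      (f := fun (t s : ℝ) => Φ' (t - s, f' s)) ?_ continuous_id
    exact hΦ'c.comp ((continuous_fst.sub continuous_snd).prodMk (hf'.comp continuous_snd))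
  have hcont : ContinuousOn h (Ici 0) := hcont'.continuousOn.congr hcongr
  have hgcont : Continuous g := by
    apply intervalIntegral.continuous_parametric_intervalIntegral_of_continuous
      (f := fun (t s : ℝ) => φ' (t - s) * ‖f' s‖) ?_ continuous_id
    exact (hφ'.comp (continuous_fst.sub continuous_snd)).mul (hf'.comp continuous_snd).norm
  have hdom : ∀ t : ℝ, 0 ≤ t → ‖h t‖ ≤ g t := by
    intro t ht
    rw [hcongr t ht]
    calc ‖∫ s in (0:ℝ)..t, Φ' (t - s, f' s)‖
        ≤ ∫ s in (0:ℝ)..t, ‖Φ' (t - s, f' s)‖ :=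
          intervalIntegral.norm_integral_le_integral_norm ht
      _ ≤ g t := by
          apply intervalIntegral.integral_mono_on ht
          · exact ((hΦ'c.comp ((continuous_const.sub continuous_id).prodMk hf')).norm).intervalIntegrable _ _
          · exact ((hφ'.comp (continuous_const.sub continuous_id)).mul hf'.norm).intervalIntegrable _ _
          · intro s hs
            have hts : (0:ℝ) ≤ t - s := by linarith [hs.2]
            have h1 : max (t - s) 0 = t - s := max_eq_left hts
            calc ‖Φ' (t - s, f' s)‖ = ‖Φ (t - s) (f' s)‖ := by simp only [Φ', h1]
              _ ≤ φ (t - s) * ‖f' s‖ := hbound _ hts _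
              _ = φ' (t - s) * ‖f' s‖ := by simp only [φ', h1]
  set Iφ := ∫ τ in Ioi (0:ℝ), φ τ with hIφdef
  set If := ∫ s in Ioi (0:ℝ), ‖f s‖ with hIfdef
  have hIφ0 : 0 ≤ Iφ := setIntegral_nonneg measurableSet_Ioi fun τ hτ => hφ_nonneg τ (le_of_lt (mem_Ioi.1 hτ))
  have hIf0 : 0 ≤ If := setIntegral_nonneg measurableSet_Ioi fun s _ => norm_nonneg _
  have hφ'_int : IntegrableOn φ' (Ioi 0) :=
    hφ_int.congr_fun (fun τ hτ => by simp [φ', max_eq_left (le_of_lt (mem_Ioi.1 hτ))]) measurableSet_Ioi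
  have hf'_int : IntegrableOn (fun s => ‖f' s‖) (Ioi 0) :=
    (hf_int.congr_fun (fun s hs => by simp [f', max_eq_left (le_of_lt (mem_Ioi.1 hs))]) measurableSet_Ioi).norm
  have lφ : (∫⁻ τ in Ioi (0:ℝ), ENNReal.ofReal (φ' τ)) = ENNReal.ofReal Iφ := by
    rw [← ofReal_integral_eq_lintegral_ofReal hφ'_int (ae_of_all _ hφ'_nonneg)]
    congr 1
    exact setIntegral_congr_fun measurableSet_Ioi fun τ hτ => by
      simp [φ', max_eq_left (le_of_lt (mem_Ioi.1 hτ))]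
  have lf : (∫⁻ s in Ioi (0:ℝ), ENNReal.ofReal ‖f' s‖) = ENNReal.ofReal If := by
    rw [← ofReal_integral_eq_lintegral_ofReal hf'_int (ae_of_all _ fun s => norm_nonneg _)]
    congr 1
    exact setIntegral_congr_fun measurableSet_Ioi fun s hs => by
      simp [f', max_eq_left (le_of_lt (mem_Ioi.1 hs))]
  set K : ℝ × ℝ → ENNReal := fun p =>
    Set.indicator {q : ℝ × ℝ | 0 < q.2 ∧ q.2 < q.1}
      (fun q => ENNReal.ofReal (φ' (q.1 - q.2) * ‖f' q.2‖)) p with hKdef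
  have hKmeas : Measurable K := by
    apply Measurable.indicator
    · exact (ENNReal.continuous_ofReal.comp
        ((hφ'.comp (continuous_fst.sub continuous_snd)).mul
          (hf'.comp continuous_snd).norm)).measurable
    · have : {q : ℝ × ℝ | 0 < q.2 ∧ q.2 < q.1} =
          {q : ℝ × ℝ | 0 < q.2} ∩ {q : ℝ × ℝ | q.2 < q.1} := rfl
      rw [this]
      exact (measurableSet_lt measurable_const measurable_snd).inter
        (measurableSet_lt measurable_snd measurable_fst)
  have hswap : (∫⁻ t, ∫⁻ s, K (t, s)) = ∫⁻ s, ∫⁻ t, K (t, s) :=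
    lintegral_lintegral_swap hKmeas.aemeasurable
  have hinner : ∀ s : ℝ, (∫⁻ t, K (t, s)) =
      Set.indicator (Ioi (0:ℝ)) (fun s => ENNReal.ofReal ‖f' s‖ * ENNReal.ofReal Iφ) s := by
    intro s
    by_cases hs : 0 < s
    · rw [Set.indicator_of_mem (mem_Ioi.mpr hs)]
      have e1 : ∀ t : ℝ, K (t, s) =
          (Ioi (0:ℝ)).indicator (fun u => ENNReal.ofReal (φ' u * ‖f' s‖)) (t + -s) := by
        intro t
        by_cases hts : s < t
        · simp only [hKdef]
          rw [Set.indicator_of_mem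
              (show ((t,s) : ℝ × ℝ) ∈ {q : ℝ × ℝ | 0 < q.2 ∧ q.2 < q.1} from ⟨hs, hts⟩),
            Set.indicator_of_mem (show t + -s ∈ Ioi (0:ℝ) from by simp [mem_Ioi]; linarith)]
          norm_num [sub_eq_add_neg]
        · simp only [hKdef]
          rw [Set.indicator_of_notMem
              (show ((t,s) : ℝ × ℝ) ∉ {q : ℝ × ℝ | 0 < q.2 ∧ q.2 < q.1} from
                fun hmem => hts hmem.2),
            Set.indicator_of_notMem (show t + -s ∉ Ioi (0:ℝ) from by simp [mem_Ioi]; linarith)]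
      calc (∫⁻ t, K (t, s))
          = ∫⁻ t, (Ioi (0:ℝ)).indicator (fun u => ENNReal.ofReal (φ' u * ‖f' s‖)) (t + -s) :=
            lintegral_congr e1
        _ = ∫⁻ u, (Ioi (0:ℝ)).indicator (fun u => ENNReal.ofReal (φ' u * ‖f' s‖)) u :=
            lintegral_add_right_eq_self _ (-s)
        _ = ∫⁻ u in Ioi (0:ℝ), ENNReal.ofReal (φ' u * ‖f' s‖) :=
            lintegral_indicator measurableSet_Ioi _
        _ = ∫⁻ u in Ioi (0:ℝ), ENNReal.ofReal (φ' u) * ENNReal.ofReal ‖f' s‖ := by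
            congr 1; funext u; rw [ENNReal.ofReal_mul (hφ'_nonneg u)]
        _ = (∫⁻ u in Ioi (0:ℝ), ENNReal.ofReal (φ' u)) * ENNReal.ofReal ‖f' s‖ :=
            lintegral_mul_const _ hφ'.measurable.ennreal_ofReal
        _ = ENNReal.ofReal ‖f' s‖ * ENNReal.ofReal Iφ := by rw [lφ, mul_comm]
    · rw [Set.indicator_of_notMem (by simpa using hs)]
      have e1 : ∀ t : ℝ, K (t, s) = 0 := fun t =>
        Set.indicator_of_notMem (fun hmem => hs hmem.1) _
      simp [lintegral_congr e1]
  have hRHS : (∫⁻ s, ∫⁻ t, K (t, s)) = ENNReal.ofReal Iφ * ENNReal.ofReal If := by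
    rw [lintegral_congr hinner, lintegral_indicator measurableSet_Ioi _,
      lintegral_mul_const _ hf'.norm.measurable.ennreal_ofReal, lf, mul_comm]
  have hgt : ∀ t ∈ Ioi (0:ℝ), ENNReal.ofReal (g t) = ∫⁻ s, K (t, s) := by
    intro t ht
    have ht' : (0:ℝ) ≤ t := (mem_Ioi.mp ht).le
    have e1 : ∀ s : ℝ, K (t, s) =
        (Ioo (0:ℝ) t).indicator (fun s => ENNReal.ofReal (φ' (t - s) * ‖f' s‖)) s := by
      intro s
      by_cases hs : 0 < s ∧ s < t
      · simp only [hKdef]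
        rw [Set.indicator_of_mem
            (show ((t,s) : ℝ × ℝ) ∈ {q : ℝ × ℝ | 0 < q.2 ∧ q.2 < q.1} from hs),
          Set.indicator_of_mem (mem_Ioo.mpr hs)]
      · simp only [hKdef]
        rw [Set.indicator_of_notMem
            (show ((t,s) : ℝ × ℝ) ∉ {q : ℝ × ℝ | 0 < q.2 ∧ q.2 < q.1} from hs),
          Set.indicator_of_notMem (by simpa [mem_Ioo] using hs)]
    rw [lintegral_congr e1, lintegral_indicator measurableSet_Ioo _]
    have hgi : IntegrableOn (fun s => φ' (t - s) * ‖f' s‖) (Ioo 0 t) :=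
      (((hφ'.comp (continuous_const.sub continuous_id)).mul
        hf'.norm).integrableOn_Icc).mono_set Ioo_subset_Icc_self
    rw [← ofReal_integral_eq_lintegral_ofReal hgi
      (ae_of_all _ fun s => mul_nonneg (hφ'_nonneg _) (norm_nonneg _))]
    congr 1
    rw [hgdef]
    simp only
    rw [intervalIntegral.integral_of_le ht']
    exact (setIntegral_congr_set Ioo_ae_eq_Ioc).symm
  have hg_nonneg : ∀ t : ℝ, 0 ≤ t → 0 ≤ g t := fun t ht =>
    intervalIntegral.integral_nonneg ht fun s _ => mul_nonneg (hφ'_nonneg _) (norm_nonneg _)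
  have hfin : (∫⁻ t in Ioi (0:ℝ), ENNReal.ofReal (g t)) ≤ ENNReal.ofReal Iφ * ENNReal.ofReal If := by
    calc (∫⁻ t in Ioi (0:ℝ), ENNReal.ofReal (g t)) = ∫⁻ t in Ioi (0:ℝ), ∫⁻ s, K (t, s) :=
          setLIntegral_congr_fun measurableSet_Ioi hgt
      _ ≤ ∫⁻ t, ∫⁻ s, K (t, s) := setLIntegral_le_lintegral _ _
      _ = _ := by rw [hswap, hRHS]
  have hg_int : IntegrableOn g (Ioi 0) := by
    constructor
    · exact hgcont.aestronglyMeasurable.restrict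
    · rw [hasFiniteIntegral_iff_norm]
      have e2 : (∫⁻ t in Ioi (0:ℝ), ENNReal.ofReal ‖g t‖) = ∫⁻ t in Ioi (0:ℝ), ENNReal.ofReal (g t) :=
        setLIntegral_congr_fun measurableSet_Ioi
          (fun t ht => by rw [Real.norm_of_nonneg (hg_nonneg t (le_of_lt ht))])
      rw [e2]
      exact lt_of_le_of_lt hfin (ENNReal.mul_lt_top ENNReal.ofReal_lt_top ENNReal.ofReal_lt_top)
  have hg_integral_le : (∫ t in Ioi (0:ℝ), g t) ≤ Iφ * If := by
    have e3 : (∫ t in Ioi (0:ℝ), g t) = (∫⁻ t in Ioi (0:ℝ), ENNReal.ofReal (g t)).toReal := by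
      rw [integral_eq_lintegral_of_nonneg_ae
        ((ae_restrict_iff' measurableSet_Ioi).2 (ae_of_all _ fun t ht => hg_nonneg t (le_of_lt ht)))
        hgcont.aestronglyMeasurable.restrict]
    rw [e3]
    calc (∫⁻ t in Ioi (0:ℝ), ENNReal.ofReal (g t)).toReal
        ≤ (ENNReal.ofReal Iφ * ENNReal.ofReal If).toReal :=
          ENNReal.toReal_mono (ENNReal.mul_ne_top ENNReal.ofReal_ne_top ENNReal.ofReal_ne_top) hfin
      _ = Iφ * If := by
          rw [ENNReal.toReal_mul, ENNReal.toReal_ofReal hIφ0, ENNReal.toReal_ofReal hIf0]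
  have hmeas_h : AEStronglyMeasurable h (volume.restrict (Ioi 0)) :=
    (hcont.mono Ioi_subset_Ici_self).aestronglyMeasurable measurableSet_Ioi
  have h_int : IntegrableOn h (Ioi 0) := by
    apply Integrable.mono' hg_int hmeas_h
    exact (ae_restrict_iff' measurableSet_Ioi).2 (ae_of_all _ fun t ht => hdom t (le_of_lt ht))
  refine ⟨hcont, h_int, ?_⟩
  calc (∫ t in Ioi (0:ℝ), ‖h t‖) ≤ ∫ t in Ioi (0:ℝ), g t :=
        setIntegral_mono_on h_int.norm hg_int measurableSet_Ioi fun t ht => hdom t (le_of_lt ht)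
    _ ≤ Iφ * If := hg_integral_le



variable {X Y : Type*} [NormedAddCommGroup X] [NormedSpace ℝ X] [CompleteSpace X]
  [NormedAddCommGroup Y] [NormedSpace ℝ Y] [CompleteSpace Y]

/-- `L¹`-estimate for the `(1,1)` entries of the Dyson--Phillips iterates. -/
theorem dyson_phillips_L1_estimate
    (TA : ℝ → X →L[ℝ] X) (TD : ℝ → Y →L[ℝ] Y)
    (B : Y →L[ℝ] X) (C : X →L[ℝ] Y) (M₁ M₂ ε₁ ε₂ : ℝ)
    (hTA : IsC0Semigroup TA) (hTD : IsC0Semigroup TD)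
    (hM₁ : 1 ≤ M₁) (hM₂ : 1 ≤ M₂) (hε₁ : ε₁ < 0) (hε₂ : ε₂ < 0)
    (hTAb : ∀ t : ℝ, 0 ≤ t → ‖TA t‖ ≤ M₁ * Real.exp (ε₁ * t))
    (hTDb : ∀ t : ℝ, 0 ≤ t → ‖TD t‖ ≤ M₂ * Real.exp (ε₂ * t))
    (R : ℝ → X → Y) (S11 : ℕ → ℝ → X → X) (S21 : ℕ → ℝ → X → Y)
    (hR : ∀ t x, R t x = ∫ s in (0:ℝ)..t, TD (t - s) (C (TA s x)))
    (hS11_0 : ∀ t x, S11 0 t x = TA t x)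
    (hS21_0 : ∀ t x, S21 0 t x = R t x)
    (hS11_succ : ∀ k t x, S11 (k + 1) t x = ∫ s in (0:ℝ)..t, TA (t - s) (B (S21 k s x)))
    (hS21_succ : ∀ k t x, S21 (k + 1) t x = ∫ s in (0:ℝ)..t, R (t - s) (B (S21 k s x))) :
    ∀ (k : ℕ) (x : X),
      IntegrableOn (fun t => S11 k t x) (Set.Ioi 0) volume ∧
      (∫ t in Set.Ioi (0:ℝ), ‖S11 k t x‖) ≤
        M₁ ^ (k + 1) * M₂ ^ k * ‖C‖ ^ k * ‖B‖ ^ k /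
          (|ε₁| ^ (k + 1) * |ε₂| ^ k) * ‖x‖ := by
  have hM₁0 : (0:ℝ) ≤ M₁ := le_trans zero_le_one hM₁
  have hM₂0 : (0:ℝ) ≤ M₂ := le_trans zero_le_one hM₂
  have hε₁0 : (0:ℝ) < |ε₁| := abs_pos.mpr (ne_of_lt hε₁)
  have hε₂0 : (0:ℝ) < |ε₂| := abs_pos.mpr (ne_of_lt hε₂)
  have hε₁ne : |ε₁| ≠ 0 := ne_of_gt hε₁0
  have hε₂ne : |ε₂| ≠ 0 := ne_of_gt hε₂0
  -- uniform bounds on the semigroups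
  have hTAop : ∀ t : ℝ, 0 ≤ t → ‖TA t‖ ≤ M₁ := by
    intro t ht
    refine (hTAb t ht).trans ?_
    have h1 : Real.exp (ε₁ * t) ≤ 1 := by
      rw [← Real.exp_zero]
      exact Real.exp_le_exp.mpr (mul_nonpos_of_nonpos_of_nonneg hε₁.le ht)
    nlinarith
  have hTDop : ∀ t : ℝ, 0 ≤ t → ‖TD t‖ ≤ M₂ := by
    intro t ht
    refine (hTDb t ht).trans ?_
    have h1 : Real.exp (ε₂ * t) ≤ 1 := by
      rw [← Real.exp_zero]
      exact Real.exp_le_exp.mpr (mul_nonpos_of_nonpos_of_nonneg hε₂.le ht)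
    nlinarith
  have jTA := aux_joint_cont TA M₁ hTAop hTA.2.2
  have jTD := aux_joint_cont TD M₂ hTDop hTD.2.2
  -- basic facts about `t ↦ TA t z`
  have hTAptb : ∀ z : X, ∀ t : ℝ, 0 ≤ t → ‖TA t z‖ ≤ (M₁ * ‖z‖) * Real.exp (ε₁ * t) := by
    intro z t ht
    calc ‖TA t z‖ ≤ ‖TA t‖ * ‖z‖ := (TA t).le_opNorm z
      _ ≤ (M₁ * Real.exp (ε₁ * t)) * ‖z‖ :=
          mul_le_mul_of_nonneg_right (hTAb t ht) (norm_nonneg _)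
      _ = (M₁ * ‖z‖) * Real.exp (ε₁ * t) := by ring
  have hTAx_int : ∀ z : X, IntegrableOn (fun t => TA t z) (Ioi 0) := by
    intro z
    refine Integrable.mono' ((aux_exp_int hε₁).const_mul (M₁ * ‖z‖))
      (((hTA.2.2 z).mono Ioi_subset_Ici_self).aestronglyMeasurable measurableSet_Ioi) ?_
    exact (ae_restrict_iff' measurableSet_Ioi).2
      (ae_of_all _ fun t ht => hTAptb z t (le_of_lt ht))
  have hTAx_L1 : ∀ z : X, (∫ t in Ioi (0:ℝ), ‖TA t z‖) ≤ M₁ * |ε₁|⁻¹ * ‖z‖ := by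
    intro z
    have h1 : (∫ t in Ioi (0:ℝ), ‖TA t z‖) ≤
        ∫ t in Ioi (0:ℝ), (M₁ * ‖z‖) * Real.exp (ε₁ * t) :=
      setIntegral_mono_on (hTAx_int z).norm ((aux_exp_int hε₁).const_mul _) measurableSet_Ioi
        fun t ht => hTAptb z t (le_of_lt ht)
    rw [integral_const_mul, aux_exp_val hε₁] at h1
    calc (∫ t in Ioi (0:ℝ), ‖TA t z‖) ≤ M₁ * ‖z‖ * |ε₁|⁻¹ := h1
      _ = M₁ * |ε₁|⁻¹ * ‖z‖ := by ring
  -- joint continuity of `R`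
  have hTA'j : Continuous fun q : ℝ × X => TA (max q.1 0) q.2 :=
    jTA.comp_continuous ((continuous_fst.max continuous_const).prodMk continuous_snd)
      fun q => ⟨mem_Ici.2 (le_max_right _ _), mem_univ _⟩
  have hTD'j : Continuous fun q : ℝ × Y => TD (max q.1 0) q.2 :=
    jTD.comp_continuous ((continuous_fst.max continuous_const).prodMk continuous_snd)
      fun q => ⟨mem_Ici.2 (le_max_right _ _), mem_univ _⟩
  have hR'cont : Continuous fun p : ℝ × X =>
      ∫ s in (0:ℝ)..p.1, TD (max (p.1 - s) 0) (C (TA (max s 0) p.2)) := by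
    apply intervalIntegral.continuous_parametric_intervalIntegral_of_continuous
      (f := fun (p : ℝ × X) (s : ℝ) => TD (max (p.1 - s) 0) (C (TA (max s 0) p.2)))
      ?_ continuous_fst
    exact hTD'j.comp ((continuous_fst.fst.sub continuous_snd).prodMk
      (C.continuous.comp (hTA'j.comp (continuous_snd.prodMk continuous_fst.snd))))
  have hRj : ContinuousOn (fun p : ℝ × X => R p.1 p.2) (Ici 0 ×ˢ (univ : Set X)) := by
    apply hR'cont.continuousOn.congr
    rintro ⟨t, z⟩ ⟨ht, -⟩
    have ht' : (0:ℝ) ≤ t := ht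
    simp only
    rw [hR]
    apply intervalIntegral.integral_congr
    intro s hs
    rw [uIcc_of_le ht'] at hs
    show (TD (t - s)) (C ((TA s) z)) = (TD (max (t - s) 0)) (C ((TA (max s 0)) z))
    rw [max_eq_left hs.1, max_eq_left (by linarith [hs.2] : (0:ℝ) ≤ t - s)]
  -- the scalar convolution ψ
  set ψ : ℝ → ℝ := fun τ => ∫ s in (0:ℝ)..τ, Real.exp (ε₂ * (τ - s)) * Real.exp (ε₁ * s)
    with hψdef
  have hψfull := conv_bound (fun s => Real.exp (ε₁ * s)) (fun τ y => Real.exp (ε₂ * τ) * y)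
      (fun τ => Real.exp (ε₂ * τ))
      (Real.continuous_exp.comp (continuous_const.mul continuous_id)).continuousOn
      (aux_exp_int hε₁)
      (((Real.continuous_exp.comp (continuous_const.mul continuous_fst)).mul
        continuous_snd).continuousOn)
      (Real.continuous_exp.comp (continuous_const.mul continuous_id)).continuousOn
      (aux_exp_int hε₂)
      (fun τ _ => (Real.exp_pos _).le)
      (fun τ _ y => by rw [norm_mul, Real.norm_of_nonneg (Real.exp_pos _).le])
  have hψ_cont : ContinuousOn ψ (Ici 0) := hψfull.1
  have hψ_int : IntegrableOn ψ (Ioi 0) := hψfull.2.1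
  have hψ_nonneg : ∀ τ : ℝ, 0 ≤ τ → 0 ≤ ψ τ := fun τ hτ =>
    intervalIntegral.integral_nonneg hτ fun s _ =>
      mul_nonneg (Real.exp_pos _).le (Real.exp_pos _).le
  have hψ_L1 : (∫ τ in Ioi (0:ℝ), ψ τ) ≤ |ε₂|⁻¹ * |ε₁|⁻¹ := by
    have e1 : (∫ τ in Ioi (0:ℝ), ψ τ) = ∫ τ in Ioi (0:ℝ), ‖ψ τ‖ :=
      setIntegral_congr_fun measurableSet_Ioi fun τ hτ =>
        (Real.norm_of_nonneg (hψ_nonneg τ (le_of_lt hτ))).symm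
    have e2 : (∫ s in Ioi (0:ℝ), ‖Real.exp (ε₁ * s)‖) = |ε₁|⁻¹ := by
      rw [← aux_exp_val hε₁]
      exact setIntegral_congr_fun measurableSet_Ioi fun s _ =>
        Real.norm_of_nonneg (Real.exp_pos _).le
    rw [e1]
    refine le_trans hψfull.2.2 ?_
    rw [aux_exp_val hε₂, e2]
  -- pointwise bound for R
  have hRbound : ∀ τ : ℝ, 0 ≤ τ → ∀ z : X, ‖R τ z‖ ≤ M₁ * M₂ * ‖C‖ * ψ τ * ‖z‖ := by
    intro τ hτ z
    rw [hR]
    have hcontin : ContinuousOn (fun s : ℝ => TD (τ - s) (C (TA s z))) (Icc 0 τ) := by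
      have c1 : ContinuousOn (fun s : ℝ => TA s z) (Icc 0 τ) :=
        (hTA.2.2 z).mono (Icc_subset_Ici_self)
      refine jTD.comp ((continuousOn_const.sub continuousOn_id).prodMk
        (C.continuous.comp_continuousOn c1)) ?_
      intro s hs
      exact ⟨by simp only [mem_Ici, id_eq, Pi.sub_apply]; linarith [hs.2], mem_univ _⟩
    calc ‖∫ s in (0:ℝ)..τ, TD (τ - s) (C (TA s z))‖
        ≤ ∫ s in (0:ℝ)..τ, ‖TD (τ - s) (C (TA s z))‖ :=
          intervalIntegral.norm_integral_le_integral_norm hτ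
      _ ≤ ∫ s in (0:ℝ)..τ, (M₁ * M₂ * ‖C‖ * ‖z‖) * (Real.exp (ε₂ * (τ - s)) * Real.exp (ε₁ * s)) := by
          apply intervalIntegral.integral_mono_on hτ
          · apply ContinuousOn.intervalIntegrable
            rw [uIcc_of_le hτ]
            exact hcontin.norm
          · apply Continuous.intervalIntegrable
            exact continuous_const.mul
              ((Real.continuous_exp.comp (continuous_const.mul (continuous_const.sub
                continuous_id))).mul (Real.continuous_exp.comp (continuous_const.mul
                continuous_id)))
          · intro s hs
            have hs2 : (0:ℝ) ≤ τ - s := by linarith [hs.2]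
            calc ‖TD (τ - s) (C (TA s z))‖
                ≤ ‖TD (τ - s)‖ * ‖C (TA s z)‖ := (TD _).le_opNorm _
              _ ≤ (M₂ * Real.exp (ε₂ * (τ - s))) * (‖C‖ * ((M₁ * ‖z‖) * Real.exp (ε₁ * s))) := by
                  apply mul_le_mul (hTDb _ hs2) ?_ (norm_nonneg _) (by positivity)
                  calc ‖C (TA s z)‖ ≤ ‖C‖ * ‖TA s z‖ := C.le_opNorm _
                    _ ≤ ‖C‖ * ((M₁ * ‖z‖) * Real.exp (ε₁ * s)) :=
                        mul_le_mul_of_nonneg_left (hTAptb z s hs.1) (norm_nonneg _)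
              _ = (M₁ * M₂ * ‖C‖ * ‖z‖) * (Real.exp (ε₂ * (τ - s)) * Real.exp (ε₁ * s)) := by
                  ring
      _ = (M₁ * M₂ * ‖C‖ * ‖z‖) * ψ τ := intervalIntegral.integral_const_mul _ _
      _ = M₁ * M₂ * ‖C‖ * ψ τ * ‖z‖ := by ring
  -- the main induction on S21
  have hS21P : ∀ k : ℕ, ∀ z : X, ContinuousOn (fun t => S21 k t z) (Ici 0) ∧
      IntegrableOn (fun t => S21 k t z) (Ioi 0) ∧
      (∫ t in Ioi (0:ℝ), ‖S21 k t z‖) ≤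
        (M₁ * M₂ * ‖C‖ / (|ε₁| * |ε₂|)) ^ (k+1) * ‖B‖ ^ k * ‖z‖ := by
    intro k
    induction k with
    | zero =>
      intro z
      have jTDC : ContinuousOn (fun p : ℝ × X => TD p.1 (C p.2)) (Ici 0 ×ˢ (univ : Set X)) := by
        refine jTD.comp ((continuous_fst.prodMk
          (C.continuous.comp continuous_snd)).continuousOn) ?_
        exact fun p hp => ⟨hp.1, mem_univ _⟩
      have H := conv_bound (fun s => TA s z) (fun (τ : ℝ) (y : X) => TD τ (C y))
        (fun τ => (M₂ * ‖C‖) * Real.exp (ε₂ * τ))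
        (hTA.2.2 z) (hTAx_int z) jTDC
        (continuous_const.mul (Real.continuous_exp.comp
          (continuous_const.mul continuous_id))).continuousOn
        ((aux_exp_int hε₂).const_mul _)
        (fun τ _ => by positivity)
        (by
          intro τ hτ y
          calc ‖TD τ (C y)‖ ≤ ‖TD τ‖ * ‖C y‖ := (TD τ).le_opNorm _
            _ ≤ (M₂ * Real.exp (ε₂ * τ)) * (‖C‖ * ‖y‖) :=
                mul_le_mul (hTDb τ hτ) (C.le_opNorm y) (norm_nonneg _) (by positivity)
            _ = (M₂ * ‖C‖) * Real.exp (ε₂ * τ) * ‖y‖ := by ring)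
      simp only [hS21_0, hR]
      refine ⟨H.1, H.2.1, ?_⟩
      refine le_trans H.2.2 ?_
      rw [integral_const_mul, aux_exp_val hε₂]
      calc M₂ * ‖C‖ * |ε₂|⁻¹ * ∫ s in Ioi (0:ℝ), ‖TA s z‖
          ≤ M₂ * ‖C‖ * |ε₂|⁻¹ * (M₁ * |ε₁|⁻¹ * ‖z‖) :=
            mul_le_mul_of_nonneg_left (hTAx_L1 z) (by positivity)
        _ = (M₁ * M₂ * ‖C‖ / (|ε₁| * |ε₂|)) ^ (0+1) * ‖B‖ ^ 0 * ‖z‖ := by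
            field_simp
            ring_nf
            field_simp
    | succ k ih =>
      intro z
      have jRB : ContinuousOn (fun p : ℝ × Y => R p.1 (B p.2)) (Ici 0 ×ˢ (univ : Set Y)) := by
        refine hRj.comp ((continuous_fst.prodMk
          (B.continuous.comp continuous_snd)).continuousOn) ?_
        exact fun p hp => ⟨hp.1, mem_univ _⟩
      have H := conv_bound (fun s => S21 k s z) (fun (τ : ℝ) (y : Y) => R τ (B y))
        (fun τ => (M₁ * M₂ * ‖C‖ * ‖B‖) * ψ τ)
        (ih z).1 (ih z).2.1 jRB
        (continuousOn_const.mul hψ_cont)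
        (hψ_int.const_mul _)
        (fun τ hτ => mul_nonneg (by positivity) (hψ_nonneg τ hτ))
        (by
          intro τ hτ y
          calc ‖R τ (B y)‖ ≤ M₁ * M₂ * ‖C‖ * ψ τ * ‖B y‖ := hRbound τ hτ (B y)
            _ ≤ M₁ * M₂ * ‖C‖ * ψ τ * (‖B‖ * ‖y‖) :=
                mul_le_mul_of_nonneg_left (B.le_opNorm y)
                  (mul_nonneg (mul_nonneg (mul_nonneg hM₁0 hM₂0) (norm_nonneg C))
                    (hψ_nonneg τ hτ))
            _ = (M₁ * M₂ * ‖C‖ * ‖B‖) * ψ τ * ‖y‖ := by ring)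
      simp only [hS21_succ]
      refine ⟨H.1, H.2.1, ?_⟩
      refine le_trans H.2.2 ?_
      rw [integral_const_mul]
      calc M₁ * M₂ * ‖C‖ * ‖B‖ * (∫ τ in Ioi (0:ℝ), ψ τ) * ∫ s in Ioi (0:ℝ), ‖S21 k s z‖
          ≤ (M₁ * M₂ * ‖C‖ * ‖B‖ * (|ε₂|⁻¹ * |ε₁|⁻¹)) *
              ((M₁ * M₂ * ‖C‖ / (|ε₁| * |ε₂|)) ^ (k+1) * ‖B‖ ^ k * ‖z‖) := by
            apply mul_le_mul
            · exact mul_le_mul_of_nonneg_left hψ_L1 (by positivity)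
            · exact (ih z).2.2
            · exact setIntegral_nonneg measurableSet_Ioi fun s _ => norm_nonneg _
            · positivity
        _ = (M₁ * M₂ * ‖C‖ / (|ε₁| * |ε₂|)) ^ (k+1+1) * ‖B‖ ^ (k+1) * ‖z‖ := by
            field_simp
            ring_nf
            field_simp
  -- conclusion
  intro k x
  match k with
  | 0 =>
    simp only [hS11_0]
    refine ⟨hTAx_int x, ?_⟩
    refine le_trans (hTAx_L1 x) (le_of_eq ?_)
    field_simp
    ring
  | (k+1) =>
    have jTAB : ContinuousOn (fun p : ℝ × Y => TA p.1 (B p.2)) (Ici 0 ×ˢ (univ : Set Y)) := by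
      refine jTA.comp ((continuous_fst.prodMk
        (B.continuous.comp continuous_snd)).continuousOn) ?_
      exact fun p hp => ⟨hp.1, mem_univ _⟩
    have H := conv_bound (fun s => S21 k s x) (fun (τ : ℝ) (y : Y) => TA τ (B y))
      (fun τ => (M₁ * ‖B‖) * Real.exp (ε₁ * τ))
      (hS21P k x).1 (hS21P k x).2.1 jTAB
      (continuous_const.mul (Real.continuous_exp.comp
        (continuous_const.mul continuous_id))).continuousOn
      ((aux_exp_int hε₁).const_mul _)
      (fun τ _ => by positivity)
      (by
        intro τ hτ y
        calc ‖TA τ (B y)‖ ≤ ‖TA τ‖ * ‖B y‖ := (TA τ).le_opNorm _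
          _ ≤ (M₁ * Real.exp (ε₁ * τ)) * (‖B‖ * ‖y‖) :=
              mul_le_mul (hTAb τ hτ) (B.le_opNorm y) (norm_nonneg _) (by positivity)
          _ = (M₁ * ‖B‖) * Real.exp (ε₁ * τ) * ‖y‖ := by ring)
    simp only [hS11_succ]
    refine ⟨H.2.1, ?_⟩
    refine le_trans H.2.2 ?_
    rw [integral_const_mul, aux_exp_val hε₁]
    calc M₁ * ‖B‖ * |ε₁|⁻¹ * ∫ s in Ioi (0:ℝ), ‖S21 k s x‖
        ≤ (M₁ * ‖B‖ * |ε₁|⁻¹) *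
            ((M₁ * M₂ * ‖C‖ / (|ε₁| * |ε₂|)) ^ (k+1) * ‖B‖ ^ k * ‖x‖) :=
          mul_le_mul_of_nonneg_left (hS21P k x).2.2 (by positivity)
      _ = M₁ ^ (k+1+1) * M₂ ^ (k+1) * ‖C‖ ^ (k+1) * ‖B‖ ^ (k+1) /
            (|ε₁| ^ (k+1+1) * |ε₂| ^ (k+1)) * ‖x‖ := by
          field_simp
          ring_nf
          field_simp
          simp only [one_div, inv_pow]
          field_simp
end
end
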